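/- arXiv:2210.12249 — 6 statements merged into one kernel-verified Lean document; each statement's English description precedes it below -/
import Mathlib

section
/- Let q be an odd prime power with q ≡ 1 (mod 4), and let η be the quadratic character of F_q. Then the number of x ∈ F_q satisfying η(x+1)(x+1) + η(x)x = 1 equals (q+3)/4, where η(x) is interpreted as an element of F_q via ℤ → F_q. -/
open Finset

private lemma aux_sum_chi {Fq : Type*} [Field Fq] [Fintype Fq] [DecidableEq Fq]
    (hq : ringChar Fq ≠ 2) :
    ∑ x : Fq, quadraticChar Fq (x * (x + 1)) = -1 := by
  have h0 : quadraticChar Fq ((0 : Fq) * (0 + 1)) = 0 := by simp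
  rw [← Finset.sum_erase (f := fun x : Fq => quadraticChar Fq (x * (x + 1))) Finset.univ h0]
  have key : ∀ x ∈ Finset.univ.erase (0 : Fq),
      quadraticChar Fq (x * (x + 1)) = quadraticChar Fq (1 + x⁻¹) := by
    intro x hx
    have hx0 : x ≠ 0 := (Finset.mem_erase.mp hx).1
    have hxe : x * (x + 1) = x ^ 2 * (1 + x⁻¹) := by field_simp
    rw [hxe, map_mul, quadraticChar_sq_one' hx0, one_mul]
  rw [Finset.sum_congr rfl key]
  have hbij : ∑ x ∈ Finset.univ.erase (0 : Fq), quadraticChar Fq (1 + x⁻¹) =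
      ∑ y ∈ Finset.univ.erase (1 : Fq), quadraticChar Fq y := by
    refine Finset.sum_bij' (i := fun x _ => 1 + x⁻¹) (j := fun y _ => (y - 1)⁻¹)
      ?_ ?_ ?_ ?_ ?_
    · intro x hx
      rw [Finset.mem_erase]
      refine ⟨?_, Finset.mem_univ _⟩
      intro h
      apply (Finset.mem_erase.mp hx).1
      have hxi : x⁻¹ = 0 := by linear_combination h
      exact inv_eq_zero.mp hxi
    · intro y hy
      rw [Finset.mem_erase]
      exact ⟨inv_ne_zero (sub_ne_zero.mpr (Finset.mem_erase.mp hy).1), Finset.mem_univ _⟩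
    · intro x hx
      simp
    · intro y hy
      have h1 : y - 1 ≠ 0 := sub_ne_zero.mpr (Finset.mem_erase.mp hy).1
      simp only [inv_inv]
      ring
    · intro x hx; rfl
  rw [hbij, Finset.sum_erase_eq_sub (Finset.mem_univ (1 : Fq)),
    quadraticChar_sum_zero hq, map_one]
  ring

theorem c_neg_one_b_one_count_q1mod4
    {Fq : Type*} [Field Fq] [Fintype Fq] [DecidableEq Fq]
    (hq : ringChar Fq ≠ 2) (h4 : Fintype.card Fq % 4 = 1) :
    {x : Fq | ((quadraticChar Fq (x + 1) : ℤ) : Fq) * (x + 1) +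
        ((quadraticChar Fq x : ℤ) : Fq) * x = 1}.ncard =
      (Fintype.card Fq + 3) / 4 := by
  have h2 : (2 : Fq) ≠ 0 := Ring.two_ne_zero hq
  have hm1 : quadraticChar Fq (-1 : Fq) = 1 := by
    rw [quadraticChar_one_iff_isSquare (neg_ne_zero.mpr one_ne_zero),
      FiniteField.isSquare_neg_one_iff]
    omega
  -- the key equivalence
  have hiff : ∀ x : Fq,
      (((quadraticChar Fq (x + 1) : ℤ) : Fq) * (x + 1) +
        ((quadraticChar Fq x : ℤ) : Fq) * x = 1) ↔
      (x = 0 ∨ (quadraticChar Fq x = -1 ∧ quadraticChar Fq (x + 1) = 1)) := by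
    intro x
    constructor
    · intro hP
      by_cases hx0 : x = 0
      · exact Or.inl hx0
      right
      by_cases hx1 : x + 1 = 0
      · exfalso
        have hxm : x = -1 := by linear_combination hx1
        rw [hx1, hxm, quadraticChar_zero, hm1] at hP
        push_cast at hP
        exact h2 (by linear_combination -hP)
      rcases quadraticChar_dichotomy hx0 with h | h
      · rcases quadraticChar_dichotomy hx1 with h' | h'
        · exfalso
          rw [h, h'] at hP; push_cast at hP
          have h2x : (2 : Fq) * x = 0 := by linear_combination hP
          rcases mul_eq_zero.mp h2x with hc | hc
          · exact h2 hc
          · exact hx0 hc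
        · exfalso
          rw [h, h'] at hP; push_cast at hP
          exact h2 (by linear_combination -hP)
      · rcases quadraticChar_dichotomy hx1 with h' | h'
        · exact ⟨h, h'⟩
        · exfalso
          rw [h, h'] at hP; push_cast at hP
          have h2x : (2 : Fq) * (x + 1) = 0 := by linear_combination -hP
          rcases mul_eq_zero.mp h2x with hc | hc
          · exact h2 hc
          · exact hx1 hc
    · rintro (rfl | ⟨h, h'⟩)
      · simp
      · rw [h, h']; push_cast; ring
  -- translate the set to a finset
  have hset : {x : Fq | ((quadraticChar Fq (x + 1) : ℤ) : Fq) * (x + 1) +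
        ((quadraticChar Fq x : ℤ) : Fq) * x = 1} =
      ↑(Finset.univ.filter (fun x : Fq =>
        x = 0 ∨ (quadraticChar Fq x = -1 ∧ quadraticChar Fq (x + 1) = 1))) := by
    ext x
    simp only [Set.mem_setOf_eq, Finset.coe_filter, Finset.mem_univ, true_and,
      Set.mem_setOf_eq]
    exact hiff x
  rw [hset, Set.ncard_coe_finset]
  set T : Finset Fq :=
    Finset.univ.filter (fun x : Fq =>
      quadraticChar Fq x = -1 ∧ quadraticChar Fq (x + 1) = 1) with hT
  -- count of the full filter
  have hsplit : (Finset.univ.filter (fun x : Fq =>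
      x = 0 ∨ (quadraticChar Fq x = -1 ∧ quadraticChar Fq (x + 1) = 1))).card =
      1 + T.card := by
    rw [Finset.filter_or, Finset.card_union_of_disjoint]
    · congr 1
      rw [Finset.filter_eq']
      simp
    · rw [Finset.disjoint_left]
      intro a ha hb
      have ha0 : a = 0 := by simpa using ha
      have : quadraticChar Fq a = -1 := (Finset.mem_filter.mp hb).2.1
      rw [ha0, quadraticChar_zero] at this
      exact absurd this (by norm_num)
  rw [hsplit]
  -- count T via the character sum
  set f : Fq → ℤ := fun x => (1 - quadraticChar Fq x) * (1 + quadraticChar Fq (x + 1))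
    with hf
  have e1 : ∑ x : Fq, quadraticChar Fq (x + 1) = 0 := by
    rw [← quadraticChar_sum_zero hq]
    exact Fintype.sum_equiv (Equiv.addRight (1 : Fq)) _ _ (fun x => rfl)
  have sum_f : ∑ x : Fq, f x = (Fintype.card Fq : ℤ) + 1 := by
    have expand : ∀ x : Fq, f x =
        1 + quadraticChar Fq (x + 1) - quadraticChar Fq x
          - quadraticChar Fq (x * (x + 1)) := by
      intro x; rw [hf]; simp only; rw [map_mul]; ring
    rw [Finset.sum_congr rfl (fun x _ => expand x)]
    rw [Finset.sum_sub_distrib, Finset.sum_sub_distrib, Finset.sum_add_distrib]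
    rw [quadraticChar_sum_zero hq, e1, aux_sum_chi hq]
    simp [Finset.card_univ]
  have split := Finset.sum_filter_add_sum_filter_not Finset.univ
    (fun x : Fq => quadraticChar Fq x = -1 ∧ quadraticChar Fq (x + 1) = 1) f
  have hTsum : ∑ x ∈ T, f x = 4 * T.card := by
    have hconst : ∀ x ∈ T, f x = 4 := by
      intro x hx
      have hx' := Finset.mem_filter.mp hx
      rw [hf]; simp only
      rw [hx'.2.1, hx'.2.2]; ring
    rw [Finset.sum_congr rfl hconst, Finset.sum_const, nsmul_eq_mul, mul_comm]
  have hCsum : ∑ x ∈ Finset.univ.filter (fun x : Fq =>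
      ¬(quadraticChar Fq x = -1 ∧ quadraticChar Fq (x + 1) = 1)), f x = 2 := by
    have h0mem : (0 : Fq) ∈ Finset.univ.filter (fun x : Fq =>
        ¬(quadraticChar Fq x = -1 ∧ quadraticChar Fq (x + 1) = 1)) := by
      simp [quadraticChar_zero]
    rw [Finset.sum_eq_single_of_mem 0 h0mem]
    · rw [hf]; simp
    · intro x hx hx0
      have hx' := (Finset.mem_filter.mp hx).2
      rcases quadraticChar_dichotomy (a := x) hx0 with h | h
      · rw [hf]; simp only; rw [h]; ring
      · have hx1 : x + 1 ≠ 0 := by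
          intro hc
          have hxm : x = -1 := by linear_combination hc
          rw [hxm, hm1] at h
          norm_num at h
        rcases quadraticChar_dichotomy (a := x + 1) hx1 with h' | h'
        · exact absurd ⟨h, h'⟩ hx'
        · rw [hf]; simp only; rw [h']; ring
  have hkey : (Fintype.card Fq : ℤ) = 4 * T.card + 1 := by
    rw [sum_f, hCsum, ← hT, hTsum] at split
    linarith
  have hcard : Fintype.card Fq = 4 * T.card + 1 := by exact_mod_cast hkey
  omega
end

section
/- Let q be an odd prime power with q ≡ 3 (mod 4), let η be the quadratic character of F_q, and fix i, j ∈ {1, −1}. Let T_{i,j} = {b ∈ F_q : b ≠ ±1, η(b−1) = i, η(b+1) = j}. Then |T_{1,1}| = |T_{−1,−1}| = (q−3)/4, |T_{1,−1}| = (q−1+2η(2))/4, and |T_{−1,1}| = (q−1−2η(2))/4. -/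
open Finset

theorem T_ij_card_q3mod4
    {Fq : Type*} [Field Fq] [Fintype Fq] [DecidableEq Fq]
    (hq : ringChar Fq ≠ 2) (h4 : Fintype.card Fq % 4 = 3) :
    (({b : Fq | b ≠ 1 ∧ b ≠ -1 ∧ quadraticChar Fq (b - 1) = 1 ∧
        quadraticChar Fq (b + 1) = 1}.ncard : ℤ) = ((Fintype.card Fq : ℤ) - 3) / 4) ∧
    (({b : Fq | b ≠ 1 ∧ b ≠ -1 ∧ quadraticChar Fq (b - 1) = -1 ∧
        quadraticChar Fq (b + 1) = -1}.ncard : ℤ) = ((Fintype.card Fq : ℤ) - 3) / 4) ∧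
    (({b : Fq | b ≠ 1 ∧ b ≠ -1 ∧ quadraticChar Fq (b - 1) = 1 ∧
        quadraticChar Fq (b + 1) = -1}.ncard : ℤ) =
      ((Fintype.card Fq : ℤ) - 1 + 2 * quadraticChar Fq 2) / 4) ∧
    (({b : Fq | b ≠ 1 ∧ b ≠ -1 ∧ quadraticChar Fq (b - 1) = -1 ∧
        quadraticChar Fq (b + 1) = 1}.ncard : ℤ) =
      ((Fintype.card Fq : ℤ) - 1 - 2 * quadraticChar Fq 2) / 4) := by
  classical
  set χ := quadraticChar Fq with hχ
  have h2 : (2 : Fq) ≠ 0 := Ring.two_ne_zero hq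
  have hne : (1 : Fq) ≠ -1 := by
    intro h
    apply h2
    linear_combination h
  have hχm1 : χ (-1) = -1 := by
    have hodd : Fintype.card Fq % 2 = 1 := by omega
    rw [hχ, quadraticChar_neg_one hq, ZMod.χ₄_nat_eq_if_mod_four, h4, hodd]
    norm_num
  have hsum0 : ∑ a : Fq, χ a = 0 := quadraticChar_sum_zero hq
  set S : Finset Fq := Finset.univ \ {1, -1} with hS
  have hScard : (S.card : ℤ) = (Fintype.card Fq : ℤ) - 2 := by
    rw [hS, Finset.card_sdiff_of_subset (Finset.subset_univ _), Finset.card_univ]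
    have hc2 : ({1, -1} : Finset Fq).card = 2 := by
      rw [Finset.card_insert_of_notMem (by simpa using hne), Finset.card_singleton]
    rw [hc2]
    have : 2 ≤ Fintype.card Fq := by
      calc 2 = ({1, -1} : Finset Fq).card := hc2.symm
        _ ≤ _ := by simpa using Finset.card_le_univ ({1, -1} : Finset Fq)
    omega
  -- Sum 1
  have hsum1 : ∑ b ∈ S, χ (b - 1) = -χ (-2) := by
    have hfull : ∑ b : Fq, χ (b - 1) = 0 := by
      rw [Fintype.sum_equiv (Equiv.subRight (1 : Fq)) (fun b => χ (b - 1))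
        (fun a => χ a) (fun b => rfl)]
      exact hsum0
    have := Finset.sum_sdiff_eq_sub (f := fun b : Fq => χ (b - 1))
      (Finset.subset_univ ({1, -1} : Finset Fq))
    rw [hS, this, hfull, Finset.sum_pair hne]
    simp [hχ, show (-1 : Fq) - 1 = -2 by ring, quadraticChar_zero]
  -- Sum 2
  have hsum2 : ∑ b ∈ S, χ (b + 1) = -χ 2 := by
    have hfull : ∑ b : Fq, χ (b + 1) = 0 := by
      rw [Fintype.sum_equiv (Equiv.addRight (1 : Fq)) (fun b => χ (b + 1))
        (fun a => χ a) (fun b => rfl)]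
      exact hsum0
    have := Finset.sum_sdiff_eq_sub (f := fun b : Fq => χ (b + 1))
      (Finset.subset_univ ({1, -1} : Finset Fq))
    rw [hS, this, hfull, Finset.sum_pair hne]
    simp [hχ, show (1 : Fq) + 1 = 2 by ring, quadraticChar_zero]
  -- Sum 3
  have hsum3 : ∑ b ∈ S, χ (b - 1) * χ (b + 1) = -1 := by
    have hfull : ∑ b : Fq, χ (b - 1) * χ (b + 1) = -1 := by
      have step1 : ∑ b : Fq, χ (b - 1) * χ (b + 1) = ∑ c : Fq, χ (c * (c + 2)) := by
        rw [Fintype.sum_equiv (Equiv.addRight (1 : Fq)) (fun c => χ (c * (c + 2)))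
          (fun b => χ (b - 1) * χ (b + 1))]
        intro c
        simp only [Equiv.coe_addRight, ← map_mul]
        congr 1
        ring
      rw [step1]
      have step2 : ∑ c : Fq, χ (c * (c + 2)) = ∑ c ∈ Finset.univ \ {0}, χ (c * (c + 2)) := by
        rw [Finset.sum_sdiff_eq_sub (Finset.subset_univ _), Finset.sum_singleton]
        simp [hχ, quadraticChar_zero]
      rw [step2]
      have step3 : ∀ c ∈ Finset.univ \ ({0} : Finset Fq),
          χ (c * (c + 2)) = χ (1 + 2 * c⁻¹) := by
        intro c hc
        simp only [Finset.mem_sdiff, Finset.mem_singleton] at hc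
        have hc0 : c ≠ 0 := hc.2
        have : c * (c + 2) = c ^ 2 * (1 + 2 * c⁻¹) := by
          field_simp
        rw [this, map_mul, quadraticChar_sq_one' hc0, one_mul]
      rw [Finset.sum_congr rfl step3]
      have step4 : ∑ c ∈ Finset.univ \ ({0} : Finset Fq), χ (1 + 2 * c⁻¹)
          = ∑ t ∈ Finset.univ \ ({1} : Finset Fq), χ t := by
        apply Finset.sum_nbij' (i := fun c => 1 + 2 * c⁻¹) (j := fun t => 2 * (t - 1)⁻¹)
        · intro c hc
          simp only [Finset.mem_sdiff, Finset.mem_singleton] at hc ⊢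
          refine ⟨Finset.mem_univ _, ?_⟩
          have hc0 : c ≠ 0 := hc.2
          intro h
          have h0 : (2 : Fq) * c⁻¹ = 0 := by linear_combination h
          exact (mul_ne_zero h2 (inv_ne_zero hc0)) h0
        · intro t ht
          simp only [Finset.mem_sdiff, Finset.mem_singleton] at ht ⊢
          refine ⟨Finset.mem_univ _, ?_⟩
          exact mul_ne_zero h2 (inv_ne_zero (sub_ne_zero.mpr ht.2))
        · intro c hc
          simp only [Finset.mem_sdiff, Finset.mem_singleton] at hc
          have hc0 : c ≠ 0 := hc.2
          field_simp
          rw [add_sub_cancel_left, div_self h2]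
        · intro t ht
          simp only [Finset.mem_sdiff, Finset.mem_singleton] at ht
          have ht1 : t - 1 ≠ 0 := sub_ne_zero.mpr ht.2
          field_simp
          ring
        · intro c hc
          rfl
      rw [step4, Finset.sum_sdiff_eq_sub (Finset.subset_univ _), hsum0,
        Finset.sum_singleton]
      simp [hχ, map_one]
    have := Finset.sum_sdiff_eq_sub (f := fun b : Fq => χ (b - 1) * χ (b + 1))
      (Finset.subset_univ ({1, -1} : Finset Fq))
    rw [hS, this, hfull, Finset.sum_pair hne]
    simp [hχ, show (-1 : Fq) + 1 = 0 by ring, quadraticChar_zero]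
  -- main counting identity
  have main : ∀ s t : ℤ, (s = 1 ∨ s = -1) → (t = 1 ∨ t = -1) →
      4 * (((S.filter (fun b => χ (b - 1) = s ∧ χ (b + 1) = t)).card : ℤ))
        = (Fintype.card Fq : ℤ) - 2 - s * χ (-2) - t * χ 2 - s * t := by
    intro s t hs ht
    have key : ∑ b ∈ S, (1 + s * χ (b - 1)) * (1 + t * χ (b + 1))
        = (S.card : ℤ) + s * (∑ b ∈ S, χ (b - 1)) + t * (∑ b ∈ S, χ (b + 1))
          + s * t * (∑ b ∈ S, χ (b - 1) * χ (b + 1)) := by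
      calc ∑ b ∈ S, (1 + s * χ (b - 1)) * (1 + t * χ (b + 1))
          = ∑ b ∈ S, (1 + s * χ (b - 1) + t * χ (b + 1) + s * t * (χ (b - 1) * χ (b + 1))) :=
            Finset.sum_congr rfl (fun b _ => by ring)
        _ = _ := by
            rw [Finset.sum_add_distrib, Finset.sum_add_distrib, Finset.sum_add_distrib,
              Finset.sum_const, ← Finset.mul_sum, ← Finset.mul_sum, ← Finset.mul_sum]
            simp [nsmul_eq_mul]
    have key2 : ∑ b ∈ S, (1 + s * χ (b - 1)) * (1 + t * χ (b + 1))
        = 4 * (((S.filter (fun b => χ (b - 1) = s ∧ χ (b + 1) = t)).card : ℤ)) := by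
      have hpt : ∀ b ∈ S, (1 + s * χ (b - 1)) * (1 + t * χ (b + 1))
          = if (χ (b - 1) = s ∧ χ (b + 1) = t) then 4 else 0 := by
        intro b hb
        simp only [hS, Finset.mem_sdiff, Finset.mem_insert, Finset.mem_singleton,
          not_or] at hb
        have hb1 : χ (b - 1) = 1 ∨ χ (b - 1) = -1 :=
          quadraticChar_dichotomy (sub_ne_zero.mpr hb.2.1)
        have hb2 : χ (b + 1) = 1 ∨ χ (b + 1) = -1 :=
          quadraticChar_dichotomy (by
            intro h
            exact hb.2.2 (by linear_combination h))
        rcases hb1 with h1 | h1 <;> rcases hb2 with h2 | h2 <;>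
          rcases hs with rfl | rfl <;> rcases ht with rfl | rfl <;>
          simp [h1, h2] <;> norm_num
      rw [Finset.sum_congr rfl hpt, Finset.sum_ite, Finset.sum_const, Finset.sum_const]
      simp [mul_comm]
    rw [← key2, key, hScard, hsum1, hsum2, hsum3]
    ring
  have hχ2 : χ (-2) = -χ 2 := by
    rw [show (-2 : Fq) = -1 * 2 by ring, map_mul, hχm1]
    ring
  have hdich2 : χ 2 = 1 ∨ χ 2 = -1 := quadraticChar_dichotomy h2
  have hq4 : (Fintype.card Fq : ℤ) % 4 = 3 := by omega
  have hncard : ∀ s t : ℤ,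
      ({b : Fq | b ≠ 1 ∧ b ≠ -1 ∧ χ (b - 1) = s ∧ χ (b + 1) = t}.ncard : ℤ)
        = ((S.filter (fun b => χ (b - 1) = s ∧ χ (b + 1) = t)).card : ℤ) := by
    intro s t
    congr 1
    rw [Set.ncard_eq_toFinset_card']
    congr 1
    ext b
    simp only [Set.toFinset_setOf, Finset.mem_filter, Finset.mem_univ, true_and,
      hS, Finset.mem_sdiff, Finset.mem_insert, Finset.mem_singleton, not_or]
    tauto
  refine ⟨?_, ?_, ?_, ?_⟩
  · have h := main 1 1 (Or.inl rfl) (Or.inl rfl)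
    rw [hncard 1 1]
    rw [hχ2] at h
    rcases hdich2 with h2' | h2' <;> rw [h2'] at h <;> omega
  · have h := main (-1) (-1) (Or.inr rfl) (Or.inr rfl)
    rw [hncard (-1) (-1)]
    rw [hχ2] at h
    rcases hdich2 with h2' | h2' <;> rw [h2'] at h <;> omega
  · have h := main 1 (-1) (Or.inl rfl) (Or.inr rfl)
    rw [hncard 1 (-1)]
    rw [hχ2] at h
    rcases hdich2 with h2' | h2' <;> rw [h2'] at h ⊢ <;> omega
  · have h := main (-1) 1 (Or.inr rfl) (Or.inl rfl)
    rw [hncard (-1) 1]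
    rw [hχ2] at h
    rcases hdich2 with h2' | h2' <;> rw [h2'] at h ⊢ <;> omega
end

section
/- Let q be an odd prime power with q ≡ 1 (mod 4), and let η be the quadratic character of F_q. For each b ∈ F_q, let N(b) be the number of x ∈ F_q satisfying η(x+1)(x+1) + η(x)x = b (with η-values mapped into F_q). Then the number of b with N(b) = 0 is (q−1)/2, the number of b with N(b) = 1 is (q−3)/2, and N(1) = N(−1) = (q+3)/4. In particular max_b N(b) = (q+3)/4. -/
open Finset



private lemma qc_shift_sum {Fq : Type*} [Field Fq] [Fintype Fq] [DecidableEq Fq]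
    (hq : ringChar Fq ≠ 2) {c : Fq} (hc : c ≠ 0) :
    ∑ x : Fq, quadraticChar Fq x * quadraticChar Fq (x + c) = -1 := by
  have h1 : ∑ u ∈ univ.erase (1 : Fq), quadraticChar Fq u = -1 := by
    have := Finset.add_sum_erase univ (fun u : Fq => quadraticChar Fq u) (mem_univ 1)
    rw [quadraticChar_sum_zero hq] at this
    simp only [map_one] at this
    linarith
  have key : ∑ x ∈ univ.erase (0 : Fq), quadraticChar Fq x * quadraticChar Fq (x + c)
      = ∑ u ∈ univ.erase (1 : Fq), quadraticChar Fq u := by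
    apply Finset.sum_nbij' (i := fun x => 1 + c * x⁻¹) (j := fun u => c * (u - 1)⁻¹)
    · intro x hx
      simp only [mem_erase, mem_univ, and_true] at hx ⊢
      intro h
      have : c * x⁻¹ = 0 := by linear_combination h
      rcases mul_eq_zero.mp this with h' | h'
      · exact hc h'
      · exact hx (inv_eq_zero.mp h')
    · intro u hu
      simp only [mem_erase, mem_univ, and_true] at hu ⊢
      intro h
      rcases mul_eq_zero.mp h with h' | h'
      · exact hc h'
      · exact hu (by have := inv_eq_zero.mp h'; linear_combination this)
    · intro x hx
      simp only [mem_erase, mem_univ, and_true] at hx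
      field_simp
      rw [add_sub_cancel_left]; exact div_self hc
    · intro u hu
      simp only [mem_erase, mem_univ, and_true] at hu
      have hu1 : u - 1 ≠ 0 := sub_ne_zero.mpr hu
      field_simp
      ring
    · intro x hx
      simp only [mem_erase, mem_univ, and_true] at hx
      have hx2 : x * (x + c) = x ^ 2 * (1 + c * x⁻¹) := by field_simp
      rw [← map_mul, hx2, map_mul, quadraticChar_sq_one' hx, one_mul]
  rw [← key] at h1
  rw [← h1]
  rw [← Finset.add_sum_erase univ _ (mem_univ (0:Fq))]
  simp

private def gfun {Fq : Type*} [Field Fq] [Fintype Fq] [DecidableEq Fq] (x : Fq) : Fq :=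
  ((quadraticChar Fq (x + 1) : ℤ) : Fq) * (x + 1) + ((quadraticChar Fq x : ℤ) : Fq) * x

section
variable {Fq : Type*} [Field Fq] [Fintype Fq] [DecidableEq Fq]



private lemma qc_neg_one (hq : ringChar Fq ≠ 2) (h4 : Fintype.card Fq % 4 = 1) :
    quadraticChar Fq (-1) = 1 := by
  apply (quadraticChar_one_iff_isSquare (neg_ne_zero.mpr one_ne_zero)).mpr
  exact FiniteField.isSquare_neg_one_iff.mpr (by omega)


private lemma pair_count (hq : ringChar Fq ≠ 2) (h4 : Fintype.card Fq % 4 = 1)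
    {ε δ : ℤ} (hε : ε = 1 ∨ ε = -1) (hδ : δ = -ε) :
    ((univ.filter (fun x : Fq => quadraticChar Fq x = ε ∧ quadraticChar Fq (x+1) = δ)).card : ℤ) * 4
      = Fintype.card Fq - 1 := by
  have h2 : (2 : Fq) ≠ 0 := Ring.two_ne_zero hq
  have hm1 : (-1 : Fq) ≠ 0 := neg_ne_zero.mpr one_ne_zero
  have h01 : (0 : Fq) ≠ -1 := fun h => hm1 h.symm
  set s : Finset Fq := (univ.erase (-1)).erase 0 with hs
  have h0s : (0 : Fq) ∈ univ.erase (-1 : Fq) := by simp [h01]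
  -- restricted sums
  have hA : ∑ x ∈ s, (quadraticChar Fq x : ℤ) = -1 := by
    have e1 := Finset.add_sum_erase univ (fun x : Fq => (quadraticChar Fq x : ℤ)) (mem_univ (-1))
    have e2 := Finset.add_sum_erase (univ.erase (-1)) (fun x : Fq => (quadraticChar Fq x : ℤ)) h0s
    rw [quadraticChar_sum_zero hq] at e1
    simp only [qc_neg_one hq h4, quadraticChar_zero, ← hs] at e1 e2
    linarith
  have hB : ∑ x ∈ s, (quadraticChar Fq (x + 1) : ℤ) = -1 := by
    have huniv : ∑ x : Fq, (quadraticChar Fq (x + 1) : ℤ) = 0 := by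
      rw [← quadraticChar_sum_zero hq]
      exact Fintype.sum_equiv (Equiv.addRight (1 : Fq)) _ _ (fun x => rfl)
    have e1 := Finset.add_sum_erase univ (fun x : Fq => (quadraticChar Fq (x + 1) : ℤ)) (mem_univ (-1))
    have e2 := Finset.add_sum_erase (univ.erase (-1)) (fun x : Fq => (quadraticChar Fq (x + 1) : ℤ)) h0s
    rw [huniv] at e1
    simp only [neg_add_cancel, quadraticChar_zero, zero_add, map_one, ← hs] at e1 e2
    linarith
  have hC : ∑ x ∈ s, (quadraticChar Fq x : ℤ) * quadraticChar Fq (x + 1) = -1 := by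
    have huniv := qc_shift_sum hq (c := (1 : Fq)) one_ne_zero
    have e1 := Finset.add_sum_erase univ
      (fun x : Fq => (quadraticChar Fq x : ℤ) * quadraticChar Fq (x + 1)) (mem_univ (-1))
    have e2 := Finset.add_sum_erase (univ.erase (-1))
      (fun x : Fq => (quadraticChar Fq x : ℤ) * quadraticChar Fq (x + 1)) h0s
    rw [huniv] at e1
    simp only [neg_add_cancel, quadraticChar_zero, mul_zero, zero_mul, zero_add, ← hs] at e1 e2
    linarith
  have hscard : (s.card : ℤ) = Fintype.card Fq - 2 := by
    have : s.card = Fintype.card Fq - 2 := by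
      rw [hs, card_erase_of_mem h0s, card_erase_of_mem (mem_univ _), card_univ]
      omega
    have hq2 : 2 ≤ Fintype.card Fq := Fintype.one_lt_card
    omega
  -- sum of the product over s
  have hsum : ∑ x ∈ s, (1 + ε * quadraticChar Fq x) * (1 + δ * quadraticChar Fq (x + 1))
      = Fintype.card Fq - 1 := by
    have expand : ∀ x : Fq, (1 + ε * quadraticChar Fq x) * (1 + δ * quadraticChar Fq (x + 1))
        = 1 + ε * quadraticChar Fq x + δ * quadraticChar Fq (x + 1)
          + (ε * δ) * ((quadraticChar Fq x : ℤ) * quadraticChar Fq (x + 1)) := by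
      intro x; ring
    simp_rw [expand]
    rw [Finset.sum_add_distrib, Finset.sum_add_distrib, Finset.sum_add_distrib,
      ← Finset.mul_sum, ← Finset.mul_sum, ← Finset.mul_sum, hA, hB, hC, Finset.sum_const,
      nsmul_eq_mul, mul_one]
    rw [hscard]
    rcases hε with rfl | rfl <;> subst hδ <;> push_cast <;> ring
  -- indicator
  have hfilter : univ.filter (fun x : Fq => quadraticChar Fq x = ε ∧ quadraticChar Fq (x+1) = δ)
      = s.filter (fun x : Fq => quadraticChar Fq x = ε ∧ quadraticChar Fq (x+1) = δ) := by
    ext x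
    simp only [mem_filter, mem_univ, true_and, hs, mem_erase]
    constructor
    · rintro ⟨hx, hx1⟩
      have hx0 : x ≠ 0 := by
        rintro rfl; rw [quadraticChar_zero] at hx
        rcases hε with rfl | rfl <;> simp_all
      have hxm : x ≠ -1 := by
        rintro rfl; rw [neg_add_cancel, quadraticChar_zero] at hx1
        rcases hε with rfl | rfl <;> subst hδ <;> simp_all
      tauto
    · tauto
  have hpoint : ∀ x ∈ s, (1 + ε * quadraticChar Fq x) * (1 + δ * quadraticChar Fq (x + 1))
      = if quadraticChar Fq x = ε ∧ quadraticChar Fq (x+1) = δ then 4 else 0 := by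
    intro x hx
    rw [hs] at hx
    simp only [mem_erase, mem_univ, and_true] at hx
    obtain ⟨hx0, hxm1⟩ := hx
    have hx1 : x + 1 ≠ 0 := fun h => hxm1 (by linear_combination h)
    rcases quadraticChar_dichotomy hx0 with h1 | h1 <;>
      rcases quadraticChar_dichotomy hx1 with h2 | h2 <;>
      rcases hε with rfl | rfl <;> subst hδ <;>
      simp [h1, h2] <;> norm_num
  rw [Finset.sum_congr rfl hpoint, Finset.sum_ite, Finset.sum_const, Finset.sum_const] at hsum
  rw [hfilter]
  simp only [smul_eq_mul, mul_zero, add_zero, mul_comm] at hsum ⊢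
  rw [← hsum]
  ring




private lemma b_counts (hq : ringChar Fq ≠ 2) (h4 : Fintype.card Fq % 4 = 1) :
    (univ.filter (fun b : Fq => quadraticChar Fq (b ^ 2 - 1) = 1)).card * 2 + 3
        = Fintype.card Fq ∧
    (univ.filter (fun b : Fq => quadraticChar Fq (b ^ 2 - 1) = -1)).card * 2 + 1
        = Fintype.card Fq := by
  have h2 : (2 : Fq) ≠ 0 := Ring.two_ne_zero hq
  have hm11 : (-1 : Fq) ≠ 1 := Ring.neg_one_ne_one_of_char_ne_two hq
  set F1 := univ.filter (fun b : Fq => quadraticChar Fq (b ^ 2 - 1) = 1) with hF1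
  set Fm := univ.filter (fun b : Fq => quadraticChar Fq (b ^ 2 - 1) = -1) with hFm
  have hdisj : Disjoint F1 Fm := by
    rw [hF1, hFm, Finset.disjoint_filter]
    intro b _ h
    rw [h]; norm_num
  -- total sum
  have hsum : ∑ b : Fq, quadraticChar Fq (b ^ 2 - 1) = -1 := by
    have e : ∀ b : Fq, quadraticChar Fq (b ^ 2 - 1)
        = quadraticChar Fq (b - 1) * quadraticChar Fq ((b - 1) + 2) := by
      intro b
      rw [← map_mul]
      congr 1
      ring
    simp_rw [e]
    rw [show ∑ b : Fq, quadraticChar Fq (b - 1) * quadraticChar Fq ((b - 1) + 2)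
        = ∑ x : Fq, quadraticChar Fq x * quadraticChar Fq (x + 2) from
      Fintype.sum_equiv (Equiv.subRight (1 : Fq)) _ _ (fun b => rfl)]
    exact qc_shift_sum hq h2
  have e0 : ∑ b : Fq, quadraticChar Fq (b ^ 2 - 1)
      = ∑ b ∈ F1 ∪ Fm, quadraticChar Fq (b ^ 2 - 1) := by
    symm
    apply Finset.sum_subset (Finset.subset_univ _)
    intro b _ hb
    simp only [hF1, hFm, mem_union, mem_filter, mem_univ, true_and, not_or] at hb
    rcases eq_or_ne (b ^ 2 - 1) 0 with h | h
    · rw [h, quadraticChar_zero]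
    · rcases quadraticChar_dichotomy h with h' | h' <;> tauto
  have r1 : ∑ b ∈ F1, quadraticChar Fq (b ^ 2 - 1) = (F1.card : ℤ) := by
    rw [Finset.sum_congr rfl (fun b hb => by
      simp only [hF1, mem_filter] at hb; exact hb.2), Finset.sum_const, nsmul_eq_mul, mul_one]
  have r4 : ∑ b ∈ Fm, quadraticChar Fq (b ^ 2 - 1) = -(Fm.card : ℤ) := by
    rw [Finset.sum_congr rfl (fun b hb => by
      simp only [hFm, mem_filter] at hb; exact hb.2), Finset.sum_const, nsmul_eq_mul,
      mul_neg, mul_one]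
  rw [e0, Finset.sum_union hdisj, r1, r4] at hsum
  -- sum of cards
  have hunion : F1.card + Fm.card + 2 = Fintype.card Fq := by
    have hun : F1 ∪ Fm = univ \ {(1 : Fq), -1} := by
      ext b
      simp only [hF1, hFm, mem_union, mem_filter, mem_univ, true_and, mem_sdiff, mem_insert,
        mem_singleton, not_or]
      constructor
      · intro h
        have hne : b ^ 2 - 1 ≠ 0 := by
          intro h0
          rcases h with h | h <;> rw [h0, quadraticChar_zero] at h <;> norm_num at h
        refine ⟨?_, ?_⟩ <;> rintro rfl <;> apply hne <;> ring
      · rintro ⟨hb1, hbm⟩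
        have hne : b ^ 2 - 1 ≠ 0 := by
          intro h0
          have : (b - 1) * (b + 1) = 0 := by linear_combination h0
          rcases mul_eq_zero.mp this with h | h
          · exact hb1 (by linear_combination h)
          · exact hbm (by linear_combination h)
        exact quadraticChar_dichotomy hne
    have hcu := Finset.card_union_of_disjoint hdisj
    rw [hun] at hcu
    rw [Finset.card_sdiff_of_subset (subset_univ _), card_univ] at hcu
    rw [Finset.card_insert_of_notMem (by
      simp only [mem_singleton]; exact fun h => hm11 h.symm), Finset.card_singleton] at hcu
    have hq2 : 2 ≤ Fintype.card Fq := Fintype.one_lt_card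
    omega
  omega





private lemma g_spec (hq : ringChar Fq ≠ 2) (h4 : Fintype.card Fq % 4 = 1) (x : Fq) :
    (x = 0 ∧ gfun x = 1) ∨ (x = -1 ∧ gfun x = -1) ∨
    (quadraticChar Fq x = 1 ∧ quadraticChar Fq (x + 1) = 1 ∧ gfun x = 2 * x + 1) ∨
    (quadraticChar Fq x = -1 ∧ quadraticChar Fq (x + 1) = 1 ∧ gfun x = 1) ∨
    (quadraticChar Fq x = 1 ∧ quadraticChar Fq (x + 1) = -1 ∧ gfun x = -1) ∨
    (quadraticChar Fq x = -1 ∧ quadraticChar Fq (x + 1) = -1 ∧ gfun x = -(2 * x + 1)) := by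
  rcases eq_or_ne x 0 with rfl | hx0
  · left
    constructor
    · rfl
    · simp [gfun]
  rcases eq_or_ne x (-1) with rfl | hxm
  · right; left
    constructor
    · rfl
    · simp [gfun, qc_neg_one hq h4]
  have hx1 : x + 1 ≠ 0 := fun h => hxm (by linear_combination h)
  rcases quadraticChar_dichotomy hx0 with h1 | h1 <;>
    rcases quadraticChar_dichotomy hx1 with h2 | h2
  · right; right; left
    refine ⟨h1, h2, ?_⟩
    simp only [gfun, h1, h2]
    push_cast
    ring
  · right; right; right; right; left
    refine ⟨h1, h2, ?_⟩
    simp only [gfun, h1, h2]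
    push_cast
    ring
  · right; right; right; left
    refine ⟨h1, h2, ?_⟩
    simp only [gfun, h1, h2]
    push_cast
    ring
  · right; right; right; right; right
    refine ⟨h1, h2, ?_⟩
    simp only [gfun, h1, h2]
    push_cast
    ring

private lemma fiber_one (hq : ringChar Fq ≠ 2) (h4 : Fintype.card Fq % 4 = 1) :
    univ.filter (fun x : Fq => gfun x = 1)
      = insert (0 : Fq) (univ.filter
          (fun x : Fq => quadraticChar Fq x = -1 ∧ quadraticChar Fq (x + 1) = 1)) := by
  have h2 : (2 : Fq) ≠ 0 := Ring.two_ne_zero hq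
  have hm11 : (-1 : Fq) ≠ 1 := Ring.neg_one_ne_one_of_char_ne_two hq
  ext x
  simp only [mem_filter, mem_univ, true_and, mem_insert]
  constructor
  · intro hx
    rcases g_spec hq h4 x with ⟨h, -⟩ | ⟨rfl, hg⟩ | ⟨ha, hb, hg⟩ | ⟨ha, hb, hg⟩ | ⟨ha, hb, hg⟩ |
      ⟨ha, hb, hg⟩
    · exact Or.inl h
    · exact absurd (hg ▸ hx) hm11
    · exfalso
      rw [hx] at hg
      have hx0 : x = 0 := by
        have : 2 * x = 0 := by linear_combination -hg
        exact (mul_eq_zero.mp this).resolve_left h2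
      rw [hx0, quadraticChar_zero] at ha
      norm_num at ha
    · exact Or.inr ⟨ha, hb⟩
    · rw [hx] at hg; exact absurd hg.symm hm11
    · exfalso
      rw [hx] at hg
      have hxm : x = -1 := by
        have : 2 * (x + 1) = 0 := by linear_combination hg
        have := (mul_eq_zero.mp this).resolve_left h2
        linear_combination this
      rw [hxm, neg_add_cancel, quadraticChar_zero] at hb
      norm_num at hb
  · rintro (rfl | ⟨ha, hb⟩)
    · simp [gfun]
    · have hx0 : x ≠ 0 := fun h => by rw [h, quadraticChar_zero] at ha; norm_num at ha
      simp only [gfun, ha, hb]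
      push_cast
      ring

private lemma fiber_neg_one (hq : ringChar Fq ≠ 2) (h4 : Fintype.card Fq % 4 = 1) :
    univ.filter (fun x : Fq => gfun x = -1)
      = insert (-1 : Fq) (univ.filter
          (fun x : Fq => quadraticChar Fq x = 1 ∧ quadraticChar Fq (x + 1) = -1)) := by
  have h2 : (2 : Fq) ≠ 0 := Ring.two_ne_zero hq
  have hm11 : (-1 : Fq) ≠ 1 := Ring.neg_one_ne_one_of_char_ne_two hq
  ext x
  simp only [mem_filter, mem_univ, true_and, mem_insert]
  constructor
  · intro hx
    rcases g_spec hq h4 x with ⟨rfl, hg⟩ | ⟨h, -⟩ | ⟨ha, hb, hg⟩ | ⟨ha, hb, hg⟩ | ⟨ha, hb, hg⟩ |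
      ⟨ha, hb, hg⟩
    · exact absurd (hg ▸ hx).symm hm11
    · exact Or.inl h
    · exfalso
      rw [hx] at hg
      have hxm : x = -1 := by
        have : 2 * (x + 1) = 0 := by linear_combination -hg
        have := (mul_eq_zero.mp this).resolve_left h2
        linear_combination this
      rw [hxm, neg_add_cancel, quadraticChar_zero] at hb
      norm_num at hb
    · rw [hx] at hg; exact absurd hg hm11
    · exact Or.inr ⟨ha, hb⟩
    · exfalso
      rw [hx] at hg
      have hx0 : x = 0 := by
        have : 2 * x = 0 := by linear_combination hg
        exact (mul_eq_zero.mp this).resolve_left h2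
      rw [hx0, quadraticChar_zero] at ha
      norm_num at ha
  · rintro (rfl | ⟨ha, hb⟩)
    · simp [gfun, qc_neg_one hq h4]
    · simp only [gfun, ha, hb]
      push_cast
      ring





private lemma hb_ne (hq : ringChar Fq ≠ 2) {b : Fq} {v : ℤ} (hv : v ≠ 0)
    (hb : quadraticChar Fq (b ^ 2 - 1) = v) : b ≠ 1 ∧ b ≠ -1 := by
  constructor
  · rintro rfl
    rw [show ((1:Fq)^2 - 1 : Fq) = 0 by ring, quadraticChar_zero] at hb
    exact hv hb.symm
  · rintro rfl
    rw [show (((-1):Fq)^2 - 1 : Fq) = 0 by ring, quadraticChar_zero] at hb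
    exact hv hb.symm

private lemma fiber_other_empty (hq : ringChar Fq ≠ 2) (h4 : Fintype.card Fq % 4 = 1)
    {b : Fq} (hb : quadraticChar Fq (b ^ 2 - 1) = -1) :
    univ.filter (fun x : Fq => gfun x = b) = ∅ := by
  have h2 : (2 : Fq) ≠ 0 := Ring.two_ne_zero hq
  obtain ⟨hb1, hbm⟩ := hb_ne hq (by norm_num) hb
  rw [Finset.filter_eq_empty_iff]
  intro x _
  intro hx
  rcases g_spec hq h4 x with ⟨-, hg⟩ | ⟨-, hg⟩ | ⟨ha, hb2, hg⟩ | ⟨-, -, hg⟩ | ⟨-, -, hg⟩ |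
    ⟨ha, hb2, hg⟩
  · exact hb1 (hx.symm.trans hg)
  · exact hbm (hx.symm.trans hg)
  · have hbeq : b = 2 * x + 1 := hx.symm.trans hg
    have he : b ^ 2 - 1 = 2 ^ 2 * (x * (x + 1)) := by rw [hbeq]; ring
    rw [he, map_mul, quadraticChar_sq_one' h2, one_mul, map_mul, ha, hb2] at hb
    norm_num at hb
  · exact hb1 (hx.symm.trans hg)
  · exact hbm (hx.symm.trans hg)
  · have hbeq : b = -(2 * x + 1) := hx.symm.trans hg
    have he : b ^ 2 - 1 = 2 ^ 2 * (x * (x + 1)) := by rw [hbeq]; ring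
    rw [he, map_mul, quadraticChar_sq_one' h2, one_mul, map_mul, ha, hb2] at hb
    norm_num at hb

private lemma fiber_other_card (hq : ringChar Fq ≠ 2) (h4 : Fintype.card Fq % 4 = 1)
    {b : Fq} (hb : quadraticChar Fq (b ^ 2 - 1) = 1) :
    (univ.filter (fun x : Fq => gfun x = b)).card = 1 := by
  have h2 : (2 : Fq) ≠ 0 := Ring.two_ne_zero hq
  obtain ⟨hb1, hbm⟩ := hb_ne hq (by norm_num) hb
  set x0 : Fq := (b - 1) / 2 with hx0def
  have hx00 : x0 ≠ 0 := by
    rw [hx0def, div_ne_zero_iff]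
    exact ⟨sub_ne_zero.mpr hb1, h2⟩
  have hx01 : x0 + 1 = (b + 1) / 2 := by
    rw [hx0def]
    field_simp
    ring
  have hx0n : x0 + 1 ≠ 0 := by
    rw [hx01, div_ne_zero_iff]
    refine ⟨fun h => hbm ?_, h2⟩
    linear_combination h
  have hprod : quadraticChar Fq x0 * quadraticChar Fq (x0 + 1) = 1 := by
    rw [← map_mul]
    have he : x0 * (x0 + 1) = (b ^ 2 - 1) * (2⁻¹ : Fq) ^ 2 := by
      rw [hx01, hx0def]
      field_simp
      ring
    rw [he, map_mul, hb, quadraticChar_sq_one' (inv_ne_zero h2), one_mul]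
  rw [Finset.card_eq_one]
  have hcase3 : ∀ x : Fq, gfun x = b → quadraticChar Fq x = 1 →
      quadraticChar Fq (x + 1) = 1 → gfun x = 2 * x + 1 → x = x0 := by
    intro x hx ha hb2 hg
    rw [hx0def, eq_div_iff h2]
    linear_combination -(hx.symm.trans hg)
  have hcase6 : ∀ x : Fq, gfun x = b → gfun x = -(2 * x + 1) → x = -(x0 + 1) := by
    intro x hx hg
    apply mul_left_cancel₀ h2
    rw [hx01]
    rw [show (2:Fq) * -((b + 1) / 2) = -(b+1) by field_simp]
    linear_combination hx.symm.trans hg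
  rcases quadraticChar_dichotomy hx00 with h1 | h1
  · have h1' : quadraticChar Fq (x0 + 1) = 1 := by
      rcases quadraticChar_dichotomy hx0n with h | h
      · exact h
      · rw [h1, h] at hprod; norm_num at hprod
    refine ⟨x0, ?_⟩
    ext x
    simp only [mem_filter, mem_univ, true_and, mem_singleton]
    constructor
    · intro hx
      rcases g_spec hq h4 x with ⟨-, hg⟩ | ⟨-, hg⟩ | ⟨ha, hb2, hg⟩ | ⟨-, -, hg⟩ | ⟨-, -, hg⟩ |
        ⟨ha, hb2, hg⟩
      · exact absurd (hx.symm.trans hg) hb1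
      · exact absurd (hx.symm.trans hg) hbm
      · exact hcase3 x hx ha hb2 hg
      · exact absurd (hx.symm.trans hg) hb1
      · exact absurd (hx.symm.trans hg) hbm
      · exfalso
        have hxeq := hcase6 x hx hg
        rw [hxeq, show -(x0 + 1) = -1 * (x0 + 1) by ring, map_mul, qc_neg_one hq h4,
          one_mul, h1'] at ha
        norm_num at ha
    · rintro rfl
      simp only [gfun, h1, h1']
      push_cast
      rw [hx0def]
      field_simp
      ring
  · have h1' : quadraticChar Fq (x0 + 1) = -1 := by
      rcases quadraticChar_dichotomy hx0n with h | h
      · rw [h1, h] at hprod; norm_num at hprod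
      · exact h
    have hm : quadraticChar Fq (-(x0 + 1)) = -1 := by
      rw [show -(x0 + 1) = -1 * (x0 + 1) by ring, map_mul, qc_neg_one hq h4, one_mul, h1']
    have hm1 : quadraticChar Fq (-(x0 + 1) + 1) = -1 := by
      rw [show -(x0 + 1) + 1 = -1 * x0 by ring, map_mul, qc_neg_one hq h4, one_mul, h1]
    refine ⟨-(x0 + 1), ?_⟩
    ext x
    simp only [mem_filter, mem_univ, true_and, mem_singleton]
    constructor
    · intro hx
      rcases g_spec hq h4 x with ⟨-, hg⟩ | ⟨-, hg⟩ | ⟨ha, hb2, hg⟩ | ⟨-, -, hg⟩ | ⟨-, -, hg⟩ |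
        ⟨ha, hb2, hg⟩
      · exact absurd (hx.symm.trans hg) hb1
      · exact absurd (hx.symm.trans hg) hbm
      · exfalso
        have hxeq := hcase3 x hx ha hb2 hg
        rw [hxeq, h1] at ha
        norm_num at ha
      · exact absurd (hx.symm.trans hg) hb1
      · exact absurd (hx.symm.trans hg) hbm
      · exact hcase6 x hx hg
    · rintro rfl
      simp only [gfun, hm, hm1]
      push_cast
      rw [hx0def]
      field_simp
      ring

end

theorem c_neg_one_spectrum_q1mod4
    {Fq : Type*} [Field Fq] [Fintype Fq] [DecidableEq Fq]
    (hq : ringChar Fq ≠ 2) (h4 : Fintype.card Fq % 4 = 1)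
    (N : Fq → ℕ)
    (hN : ∀ b : Fq, N b = {x : Fq | ((quadraticChar Fq (x + 1) : ℤ) : Fq) * (x + 1) +
        ((quadraticChar Fq x : ℤ) : Fq) * x = b}.ncard) :
    {b : Fq | N b = 0}.ncard = (Fintype.card Fq - 1) / 2 ∧
    {b : Fq | N b = 1}.ncard = (Fintype.card Fq - 3) / 2 ∧
    N 1 = (Fintype.card Fq + 3) / 4 ∧
    N (-1) = (Fintype.card Fq + 3) / 4 ∧
    IsGreatest (Set.range N) ((Fintype.card Fq + 3) / 4) := by
  classical
  have h2 : (2 : Fq) ≠ 0 := Ring.two_ne_zero hq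
  have hm11 : (-1 : Fq) ≠ 1 := Ring.neg_one_ne_one_of_char_ne_two hq
  have hq5 : 5 ≤ Fintype.card Fq := by
    have h := Fintype.one_lt_card (α := Fq)
    omega
  have hN' : ∀ b : Fq, N b = (univ.filter (fun x : Fq => gfun x = b)).card := by
    intro b
    rw [hN b]
    rw [show {x : Fq | ((quadraticChar Fq (x + 1) : ℤ) : Fq) * (x + 1) +
        ((quadraticChar Fq x : ℤ) : Fq) * x = b} = {x : Fq | gfun x = b} from rfl]
    rw [Set.ncard_eq_toFinset_card', Set.toFinset_setOf]
  have hcA := pair_count (Fq := Fq) hq h4 (ε := -1) (δ := 1) (Or.inr rfl) (by norm_num)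
  have hcB := pair_count (Fq := Fq) hq h4 (ε := 1) (δ := -1) (Or.inl rfl) (by norm_num)
  have hN1 : N 1 = (Fintype.card Fq + 3) / 4 := by
    rw [hN' 1, fiber_one hq h4, Finset.card_insert_of_notMem (by
      simp [quadraticChar_zero])]
    omega
  have hNm1 : N (-1) = (Fintype.card Fq + 3) / 4 := by
    rw [hN' (-1), fiber_neg_one hq h4, Finset.card_insert_of_notMem (by
      simp [quadraticChar_zero])]
    omega
  have hother : ∀ b : Fq, b ≠ 1 → b ≠ -1 →
      (N b = 0 ∧ quadraticChar Fq (b ^ 2 - 1) = -1) ∨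
      (N b = 1 ∧ quadraticChar Fq (b ^ 2 - 1) = 1) := by
    intro b hb1 hbm
    have hne : b ^ 2 - 1 ≠ 0 := by
      intro h0
      have h' : (b - 1) * (b + 1) = 0 := by linear_combination h0
      rcases mul_eq_zero.mp h' with h | h
      · exact hb1 (by linear_combination h)
      · exact hbm (by linear_combination h)
    rcases quadraticChar_dichotomy hne with h | h
    · right; exact ⟨by rw [hN' b, fiber_other_card hq h4 h], h⟩
    · left; exact ⟨by rw [hN' b, fiber_other_empty hq h4 h, Finset.card_empty], h⟩
  obtain ⟨hB1, hBm⟩ := b_counts hq h4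
  have hval : 2 ≤ (Fintype.card Fq + 3) / 4 := by omega
  have hset0 : {b : Fq | N b = 0}
      = ↑(univ.filter (fun b : Fq => quadraticChar Fq (b ^ 2 - 1) = -1)) := by
    ext b
    simp only [Set.mem_setOf_eq, coe_filter, mem_univ, true_and]
    constructor
    · intro h
      rcases eq_or_ne b 1 with rfl | hb1
      · rw [hN1] at h; omega
      rcases eq_or_ne b (-1) with rfl | hbm
      · rw [hNm1] at h; omega
      rcases hother b hb1 hbm with ⟨-, h'⟩ | ⟨h0, -⟩
      · exact h'
      · omega
    · intro h
      obtain ⟨hb1, hbm⟩ := hb_ne hq (by norm_num) h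
      rcases hother b hb1 hbm with ⟨h0, -⟩ | ⟨-, h'⟩
      · exact h0
      · rw [h'] at h; norm_num at h
  have hset1 : {b : Fq | N b = 1}
      = ↑(univ.filter (fun b : Fq => quadraticChar Fq (b ^ 2 - 1) = 1)) := by
    ext b
    simp only [Set.mem_setOf_eq, coe_filter, mem_univ, true_and]
    constructor
    · intro h
      rcases eq_or_ne b 1 with rfl | hb1
      · rw [hN1] at h; omega
      rcases eq_or_ne b (-1) with rfl | hbm
      · rw [hNm1] at h; omega
      rcases hother b hb1 hbm with ⟨h0, -⟩ | ⟨-, h'⟩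
      · omega
      · exact h'
    · intro h
      obtain ⟨hb1, hbm⟩ := hb_ne hq (by norm_num) h
      rcases hother b hb1 hbm with ⟨-, h'⟩ | ⟨h1, -⟩
      · rw [h'] at h; norm_num at h
      · exact h1
  refine ⟨?_, ?_, hN1, hNm1, ⟨1, hN1⟩, ?_⟩
  · rw [hset0, Set.ncard_coe_finset]
    omega
  · rw [hset1, Set.ncard_coe_finset]
    omega
  · rintro n ⟨b, rfl⟩
    rcases eq_or_ne b 1 with rfl | hb1
    · rw [hN1]
    rcases eq_or_ne b (-1) with rfl | hbm
    · rw [hNm1]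
    rcases hother b hb1 hbm with ⟨h0, -⟩ | ⟨h1, -⟩ <;> omega
end

section
/- Let q be an odd prime power with q ≡ 3 (mod 4), and let η be the quadratic character of F_q. For each b ∈ F_q, let N(b) be the number of x ∈ F_q satisfying η(x+1)(x+1) + η(x)x = b. Then N(1) = (q+5)/4, N(−1) = (q+1)/4, the number of b ≠ ±1 with N(b) = 2 is (q−3)/4, and the number of b with N(b) = 0 is (3q−5)/4. -/
open Finset

section AuxC

variable {Fq : Type*} [Field Fq] [Fintype Fq] [DecidableEq Fq]

-- χ(-1) = -1 when card % 4 = 3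
lemma aux_chi_neg_one (h4 : Fintype.card Fq % 4 = 3) :
    quadraticChar Fq (-1) = -1 := by
  rw [quadraticChar_neg_one_iff_not_isSquare, FiniteField.isSquare_neg_one_iff]
  simp [h4]

lemma aux_chi_neg (h4 : Fintype.card Fq % 4 = 3) (y : Fq) :
    quadraticChar Fq (-y) = - quadraticChar Fq y := by
  rw [← neg_one_mul, map_mul, aux_chi_neg_one h4, neg_one_mul]

-- shift sum
lemma aux_sum_shift (hq : ringChar Fq ≠ 2) :
    ∑ x : Fq, (quadraticChar Fq (x + 1) : ℤ) = 0 := by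
  rw [Fintype.sum_equiv (Equiv.addRight (1:Fq)) (fun x => (quadraticChar Fq (x + 1) : ℤ))
    (fun y => (quadraticChar Fq y : ℤ)) (fun x => by simp)]
  exact quadraticChar_sum_zero hq

lemma aux_sum_mul (hq : ringChar Fq ≠ 2) :
    ∑ x : Fq, ((quadraticChar Fq x : ℤ) * quadraticChar Fq (x + 1)) = -1 := by
  have h1 : ∀ x : Fq, ((quadraticChar Fq x : ℤ) * quadraticChar Fq (x + 1))
      = quadraticChar Fq (x * (x + 1)) := fun x => (map_mul _ _ _).symm
  simp_rw [h1]
  rw [← Finset.sum_erase (f := fun x : Fq => (quadraticChar Fq (x * (x + 1)) : ℤ)) (a := 0)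
    Finset.univ (by simp)]
  have h2 : ∀ x ∈ Finset.univ.erase (0:Fq),
      ((quadraticChar Fq (x * (x + 1))) : ℤ) = quadraticChar Fq (1 + x⁻¹) := by
    intro x hx
    have hx0 : x ≠ 0 := (Finset.mem_erase.mp hx).1
    have hxx : x * (x + 1) = x ^ 2 * (1 + x⁻¹) := by field_simp
    rw [hxx, map_mul, quadraticChar_sq_one' hx0, one_mul]
  rw [Finset.sum_congr rfl h2]
  have h3 : ∑ x ∈ Finset.univ.erase (0:Fq), ((quadraticChar Fq (1 + x⁻¹)) : ℤ)
      = ∑ z ∈ Finset.univ.erase (1:Fq), ((quadraticChar Fq z) : ℤ) := by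
    refine Finset.sum_nbij' (fun x => 1 + x⁻¹) (fun z => (z - 1)⁻¹) ?_ ?_ ?_ ?_ ?_
    · intro x hx
      have hx0 : x ≠ 0 := (Finset.mem_erase.mp hx).1
      simp only [Finset.mem_erase, Finset.mem_univ, and_true]
      intro h
      exact hx0 (inv_eq_zero.mp (by linear_combination h))
    · intro z hz
      have hz1 : z ≠ 1 := (Finset.mem_erase.mp hz).1
      simp only [Finset.mem_erase, Finset.mem_univ, and_true]
      exact inv_ne_zero (sub_ne_zero.mpr hz1)
    · intro x hx
      have hx0 : x ≠ 0 := (Finset.mem_erase.mp hx).1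
      simp [inv_inv]
    · intro z hz
      have hz1 : z ≠ 1 := (Finset.mem_erase.mp hz).1
      have : z - 1 ≠ 0 := sub_ne_zero.mpr hz1
      field_simp; ring
    · intro x hx; rfl
  rw [h3, Finset.sum_erase_eq_sub (Finset.mem_univ (1:Fq))]
  rw [show ∑ z : Fq, ((quadraticChar Fq z) : ℤ) = 0 by exact_mod_cast quadraticChar_sum_zero hq]
  simp

lemma aux_count (hq : ringChar Fq ≠ 2) (h4 : Fintype.card Fq % 4 = 3)
    (ε δ : ℤ) (hε : ε = 1 ∨ ε = -1) (hδ : δ = 1 ∨ δ = -1) :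
    4 * ((Finset.univ.filter (fun x : Fq =>
        quadraticChar Fq x = ε ∧ quadraticChar Fq (x + 1) = δ)).card : ℤ)
      + (1 + δ) + (1 - ε) = (Fintype.card Fq : ℤ) - ε * δ := by
  have hm1 := aux_chi_neg_one h4
  have hne : (0:Fq) ≠ -1 := by
    intro h; exact one_ne_zero (by linear_combination h : (1:Fq) = 0)
  have key : ∀ x : Fq, (1 + ε * quadraticChar Fq x) * (1 + δ * quadraticChar Fq (x + 1))
      = (if quadraticChar Fq x = ε ∧ quadraticChar Fq (x + 1) = δ then (4:ℤ) else 0)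
        + (if x = 0 then 1 + δ else 0) + (if x = -1 then 1 - ε else 0) := by
    intro x
    by_cases hx0 : x = 0
    · subst hx0
      have hc1 : ¬(quadraticChar Fq (0:Fq) = ε ∧ quadraticChar Fq ((0:Fq) + 1) = δ) := by
        rw [quadraticChar_zero]; rintro ⟨h, -⟩; rcases hε with h'|h' <;> omega
      rw [if_pos rfl, if_neg hc1, if_neg hne, quadraticChar_zero, zero_add, map_one]
      ring
    · by_cases hx1 : x = -1
      · subst hx1
        have hc1 : ¬(quadraticChar Fq (-1:Fq) = ε ∧ quadraticChar Fq ((-1:Fq) + 1) = δ) := by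
          rw [neg_add_cancel, quadraticChar_zero]
          rintro ⟨-, h⟩; rcases hδ with h'|h' <;> omega
        rw [if_pos rfl, if_neg hc1, if_neg (fun h => hne h.symm), hm1, neg_add_cancel,
          quadraticChar_zero]
        ring
      · rw [if_neg hx0, if_neg hx1]
        have h1 : quadraticChar Fq x = 1 ∨ quadraticChar Fq x = -1 :=
          (quadraticChar_isQuadratic Fq x).resolve_left
            (fun h => hx0 (quadraticChar_eq_zero_iff.mp h))
        have hx1' : x + 1 ≠ 0 := fun h => hx1 (by linear_combination h)
        have h2 : quadraticChar Fq (x + 1) = 1 ∨ quadraticChar Fq (x + 1) = -1 :=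
          (quadraticChar_isQuadratic Fq (x + 1)).resolve_left
            (fun h => hx1' (quadraticChar_eq_zero_iff.mp h))
        rcases h1 with h1|h1 <;> rcases h2 with h2|h2 <;> rcases hε with hε|hε <;>
          rcases hδ with hδ|hδ <;> subst hε <;> subst hδ <;>
          norm_num [h1, h2]
  have hsum1 : ∑ x : Fq, ((if quadraticChar Fq x = ε ∧ quadraticChar Fq (x + 1) = δ
        then (4:ℤ) else 0)
        + (if x = 0 then 1 + δ else 0) + (if x = -1 then 1 - ε else 0))
      = 4 * ((Finset.univ.filter (fun x : Fq =>
        quadraticChar Fq x = ε ∧ quadraticChar Fq (x + 1) = δ)).card : ℤ)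
      + (1 + δ) + (1 - ε) := by
    rw [Finset.sum_add_distrib, Finset.sum_add_distrib, ← Finset.sum_filter,
      Finset.sum_const, Finset.sum_ite_eq' Finset.univ (0:Fq) (fun _ => 1 + δ),
      Finset.sum_ite_eq' Finset.univ (-1:Fq) (fun _ => 1 - ε)]
    simp [mul_comm]
  have hsum2 : ∑ x : Fq, (1 + ε * quadraticChar Fq x) * (1 + δ * quadraticChar Fq (x + 1))
      = (Fintype.card Fq : ℤ) - ε * δ := by
    have expand : ∀ x : Fq, (1 + ε * quadraticChar Fq x) * (1 + δ * quadraticChar Fq (x + 1))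
        = 1 + ε * quadraticChar Fq x + δ * quadraticChar Fq (x + 1)
          + (ε * δ) * ((quadraticChar Fq x : ℤ) * quadraticChar Fq (x + 1)) := by
      intro x; ring
    simp_rw [expand]
    rw [Finset.sum_add_distrib, Finset.sum_add_distrib, Finset.sum_add_distrib,
      ← Finset.mul_sum, ← Finset.mul_sum, ← Finset.mul_sum, aux_sum_shift hq,
      aux_sum_mul hq, Finset.sum_const,
      show ∑ x : Fq, (quadraticChar Fq x : ℤ) = 0 from quadraticChar_sum_zero hq]
    simp
    ring
  rw [← hsum1, ← hsum2]
  exact Finset.sum_congr rfl (fun x _ => (key x).symm)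

end AuxC

abbrev auxP {Fq : Type*} [Field Fq] [Fintype Fq] [DecidableEq Fq] (b : Fq) : Prop :=
  quadraticChar Fq ((b - 1) * 2⁻¹) = 1 ∧ quadraticChar Fq ((b + 1) * 2⁻¹) = 1

lemma aux_ncard {α : Type*} [Fintype α] (p : α → Prop) [DecidablePred p] :
    {x | p x}.ncard = (Finset.univ.filter p).card := by
  rw [← Set.ncard_coe_finset]; congr 1; ext x; simp

theorem c_neg_one_spectrum_q3mod4
    {Fq : Type*} [Field Fq] [Fintype Fq] [DecidableEq Fq]
    (hq : ringChar Fq ≠ 2) (h4 : Fintype.card Fq % 4 = 3)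
    (N : Fq → ℕ)
    (hN : ∀ b : Fq, N b = {x : Fq | ((quadraticChar Fq (x + 1) : ℤ) : Fq) * (x + 1) +
        ((quadraticChar Fq x : ℤ) : Fq) * x = b}.ncard) :
    N 1 = (Fintype.card Fq + 5) / 4 ∧
    N (-1) = (Fintype.card Fq + 1) / 4 ∧
    {b : Fq | b ≠ 1 ∧ b ≠ -1 ∧ N b = 2}.ncard = (Fintype.card Fq - 3) / 4 ∧
    {b : Fq | N b = 0}.ncard = (3 * Fintype.card Fq - 5) / 4 := by
  classical
  have hq3 : 3 ≤ Fintype.card Fq := by omega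
  have hm1 : quadraticChar Fq (-1) = -1 := aux_chi_neg_one h4
  have h2z : (2:Fq) ≠ 0 := Ring.two_ne_zero hq
  have h2i : (2:Fq)⁻¹ * 2 = 1 := inv_mul_cancel₀ h2z
  have hn11 : (-1 : Fq) ≠ 1 := Ring.neg_one_ne_one_of_char_ne_two hq
  have hne : (0:Fq) ≠ -1 := by
    intro h; exact one_ne_zero (by linear_combination h : (1:Fq) = 0)
  set f : Fq → Fq := fun x => ((quadraticChar Fq (x + 1) : ℤ) : Fq) * (x + 1) +
      ((quadraticChar Fq x : ℤ) : Fq) * x with hf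
  have hN' : ∀ b : Fq, N b = (Finset.univ.filter (fun x : Fq => f x = b)).card := by
    intro b
    have hsets : {x : Fq | ((quadraticChar Fq (x + 1) : ℤ) : Fq) * (x + 1) +
        ((quadraticChar Fq x : ℤ) : Fq) * x = b} = {x : Fq | f x = b} := by
      ext x; simp only [Set.mem_setOf_eq, hf]
    rw [hN b, hsets, aux_ncard (fun x : Fq => f x = b)]
  -- evaluations of f
  have hf0 : f 0 = 1 := by
    rw [hf]; simp
  have hfm1 : f (-1) = 1 := by
    rw [hf]; simp [hm1]
  have hfpp : ∀ x : Fq, quadraticChar Fq x = 1 → quadraticChar Fq (x + 1) = 1 →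
      f x = 2 * x + 1 := by
    intro x h1 h2; rw [hf]; simp only [h1, h2]; push_cast; ring
  have hfnn : ∀ x : Fq, quadraticChar Fq x = -1 → quadraticChar Fq (x + 1) = -1 →
      f x = -(2 * x + 1) := by
    intro x h1 h2; rw [hf]; simp only [h1, h2]; push_cast; ring
  have hfnp : ∀ x : Fq, quadraticChar Fq x = -1 → quadraticChar Fq (x + 1) = 1 →
      f x = 1 := by
    intro x h1 h2; rw [hf]; simp only [h1, h2]; push_cast; ring
  have hfpn : ∀ x : Fq, quadraticChar Fq x = 1 → quadraticChar Fq (x + 1) = -1 →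
      f x = -1 := by
    intro x h1 h2; rw [hf]; simp only [h1, h2]; push_cast; ring
  have cases5 : ∀ x : Fq, x = 0 ∨ x = -1 ∨
      (quadraticChar Fq x = 1 ∧ quadraticChar Fq (x + 1) = 1) ∨
      (quadraticChar Fq x = -1 ∧ quadraticChar Fq (x + 1) = -1) ∨
      (quadraticChar Fq x = -1 ∧ quadraticChar Fq (x + 1) = 1) ∨
      (quadraticChar Fq x = 1 ∧ quadraticChar Fq (x + 1) = -1) := by
    intro x
    by_cases hx0 : x = 0
    · exact Or.inl hx0
    by_cases hx1 : x = -1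
    · exact Or.inr (Or.inl hx1)
    have h1 : quadraticChar Fq x = 1 ∨ quadraticChar Fq x = -1 :=
      (quadraticChar_isQuadratic Fq x).resolve_left
        (fun h => hx0 (quadraticChar_eq_zero_iff.mp h))
    have hx1' : x + 1 ≠ 0 := fun h => hx1 (by linear_combination h)
    have h2 : quadraticChar Fq (x + 1) = 1 ∨ quadraticChar Fq (x + 1) = -1 :=
      (quadraticChar_isQuadratic Fq (x + 1)).resolve_left
        (fun h => hx1' (quadraticChar_eq_zero_iff.mp h))
    rcases h1 with h1|h1 <;> rcases h2 with h2|h2 <;> tauto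
  -- the three counting sets
  set Afin := Finset.univ.filter (fun x : Fq =>
      quadraticChar Fq x = 1 ∧ quadraticChar Fq (x + 1) = 1) with hAdef
  set Bfin := Finset.univ.filter (fun x : Fq =>
      quadraticChar Fq x = 1 ∧ quadraticChar Fq (x + 1) = -1) with hBdef
  set Cfin := Finset.univ.filter (fun x : Fq =>
      quadraticChar Fq x = -1 ∧ quadraticChar Fq (x + 1) = 1) with hCdef
  have hA : 4 * Afin.card + 3 = Fintype.card Fq := by
    have h := aux_count hq h4 1 1 (Or.inl rfl) (Or.inl rfl)
    have h' : ((4 * Afin.card + 3 : ℕ) : ℤ) = (Fintype.card Fq : ℤ) := by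
      push_cast; rw [hAdef]; linarith
    exact_mod_cast h'
  have hB : 4 * Bfin.card = Fintype.card Fq + 1 := by
    have h := aux_count hq h4 1 (-1) (Or.inl rfl) (Or.inr rfl)
    have h' : ((4 * Bfin.card : ℕ) : ℤ) = ((Fintype.card Fq + 1 : ℕ) : ℤ) := by
      push_cast; rw [hBdef]; linarith
    exact_mod_cast h'
  have hC : 4 * Cfin.card + 3 = Fintype.card Fq := by
    have h := aux_count hq h4 (-1) 1 (Or.inr rfl) (Or.inl rfl)
    have h' : ((4 * Cfin.card + 3 : ℕ) : ℤ) = (Fintype.card Fq : ℤ) := by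
      push_cast; rw [hCdef]; linarith
    exact_mod_cast h'
  -- fiber over 1
  have hfib1 : Finset.univ.filter (fun x : Fq => f x = 1) = insert 0 (insert (-1) Cfin) := by
    ext x
    simp only [Finset.mem_filter, Finset.mem_univ, true_and, Finset.mem_insert, hCdef]
    constructor
    · intro hfx
      rcases cases5 x with h|h|⟨h1,h2⟩|⟨h1,h2⟩|⟨h1,h2⟩|⟨h1,h2⟩
      · exact Or.inl h
      · exact Or.inr (Or.inl h)
      · exfalso
        rw [hfpp x h1 h2] at hfx
        have hx0 : x = 0 := by
          have h2x : (2:Fq) * x = 0 := by linear_combination hfx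
          exact (mul_eq_zero.mp h2x).resolve_left h2z
        rw [hx0, quadraticChar_zero] at h1; exact absurd h1 (by norm_num)
      · exfalso
        rw [hfnn x h1 h2] at hfx
        have hx1 : x = -1 := by
          have h2x : (2:Fq) * (x + 1) = 0 := by linear_combination -hfx
          have := (mul_eq_zero.mp h2x).resolve_left h2z
          linear_combination this
        rw [hx1, neg_add_cancel, quadraticChar_zero] at h2; exact absurd h2 (by norm_num)
      · exact Or.inr (Or.inr ⟨h1, h2⟩)
      · exfalso; rw [hfpn x h1 h2] at hfx; exact hn11 hfx
    · intro h
      rcases h with h|h|h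
      · rw [h]; exact hf0
      · rw [h]; exact hfm1
      · exact hfnp x h.1 h.2
  have hcard1 : N 1 = Cfin.card + 2 := by
    rw [hN' 1, hfib1]
    have hm1C : (-1:Fq) ∉ Cfin := by
      simp [hCdef, quadraticChar_zero]
    have h0C : (0:Fq) ∉ insert (-1) Cfin := by
      simp only [Finset.mem_insert]
      push_neg
      exact ⟨hne, by simp [hCdef, quadraticChar_zero]⟩
    rw [Finset.card_insert_of_notMem h0C, Finset.card_insert_of_notMem hm1C]
  -- fiber over -1
  have hfibm1 : Finset.univ.filter (fun x : Fq => f x = -1) = Bfin := by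
    ext x
    simp only [Finset.mem_filter, Finset.mem_univ, true_and, hBdef]
    constructor
    · intro hfx
      rcases cases5 x with h|h|⟨h1,h2⟩|⟨h1,h2⟩|⟨h1,h2⟩|⟨h1,h2⟩
      · exfalso; rw [h, hf0] at hfx; exact hn11 hfx.symm
      · exfalso; rw [h, hfm1] at hfx; exact hn11 hfx.symm
      · exfalso
        rw [hfpp x h1 h2] at hfx
        have hx1 : x = -1 := by
          have h2x : (2:Fq) * (x + 1) = 0 := by linear_combination hfx
          have := (mul_eq_zero.mp h2x).resolve_left h2z
          linear_combination this
        rw [hx1, hm1] at h1; exact absurd h1 (by norm_num)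
      · exfalso
        rw [hfnn x h1 h2] at hfx
        have hx0 : x = 0 := by
          have h2x : (2:Fq) * x = 0 := by linear_combination -hfx
          exact (mul_eq_zero.mp h2x).resolve_left h2z
        rw [hx0, quadraticChar_zero] at h1; exact absurd h1 (by norm_num)
      · exfalso; rw [hfnp x h1 h2] at hfx; exact hn11 hfx.symm
      · exact ⟨h1, h2⟩
    · intro h; exact hfpn x h.1 h.2
  have hcardm1 : N (-1) = Bfin.card := by rw [hN' (-1), hfibm1]
  -- generic b
  have hx1add : ∀ b : Fq, (b - 1) * 2⁻¹ + 1 = (b + 1) * 2⁻¹ := by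
    intro b; linear_combination -h2i
  have hx2add : ∀ b : Fq, (-(b + 1)) * 2⁻¹ + 1 = (-(b - 1)) * 2⁻¹ := by
    intro b; linear_combination -h2i
  have hPne : ∀ b : Fq, auxP b → b ≠ 1 ∧ b ≠ -1 ∧ b ≠ 0 := by
    intro b hP
    refine ⟨?_, ?_, ?_⟩
    · rintro rfl
      have h1 := hP.1
      rw [sub_self, zero_mul, quadraticChar_zero] at h1
      exact absurd h1 (by norm_num)
    · rintro rfl
      have h2 := hP.2
      rw [neg_add_cancel, zero_mul, quadraticChar_zero] at h2
      exact absurd h2 (by norm_num)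
    · rintro rfl
      have h1 := hP.1
      have h2 := hP.2
      have e1 : ((0:Fq) - 1) * 2⁻¹ = -(((0:Fq) + 1) * 2⁻¹) := by ring
      rw [e1, aux_chi_neg h4] at h1
      omega
  have hfib2 : ∀ b : Fq, b ≠ 1 → b ≠ -1 → auxP b →
      Finset.univ.filter (fun x : Fq => f x = b) =
        {(b - 1) * 2⁻¹, (-(b + 1)) * 2⁻¹} := by
    intro b hb1 hbm1 hP
    ext x
    simp only [Finset.mem_filter, Finset.mem_univ, true_and, Finset.mem_insert,
      Finset.mem_singleton]
    constructor
    · intro hfx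
      rcases cases5 x with h|h|⟨h1,h2⟩|⟨h1,h2⟩|⟨h1,h2⟩|⟨h1,h2⟩
      · exfalso; rw [h, hf0] at hfx; exact hb1 hfx.symm
      · exfalso; rw [h, hfm1] at hfx; exact hb1 hfx.symm
      · left
        rw [hfpp x h1 h2] at hfx
        linear_combination (2:Fq)⁻¹ * hfx - x * h2i
      · right
        rw [hfnn x h1 h2] at hfx
        linear_combination (-(2:Fq)⁻¹) * hfx - x * h2i
      · exfalso; rw [hfnp x h1 h2] at hfx; exact hb1 hfx.symm
      · exfalso; rw [hfpn x h1 h2] at hfx; exact hbm1 hfx.symm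
    · intro h
      rcases h with rfl|rfl
      · have h2' : quadraticChar Fq ((b - 1) * 2⁻¹ + 1) = 1 := by
          rw [hx1add b]; exact hP.2
        rw [hfpp _ hP.1 h2']
        linear_combination (b - 1) * h2i
      · have h1' : quadraticChar Fq ((-(b + 1)) * 2⁻¹) = -1 := by
          rw [show (-(b + 1)) * 2⁻¹ = -((b + 1) * 2⁻¹) from by ring, aux_chi_neg h4, hP.2]
        have h2' : quadraticChar Fq ((-(b + 1)) * 2⁻¹ + 1) = -1 := by
          rw [hx2add b, show (-(b - 1)) * 2⁻¹ = -((b - 1) * 2⁻¹) from by ring,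
            aux_chi_neg h4, hP.1]
        rw [hfnn _ h1' h2']
        linear_combination (b + 1) * h2i
  have hfib0 : ∀ b : Fq, b ≠ 1 → b ≠ -1 → ¬ auxP b →
      Finset.univ.filter (fun x : Fq => f x = b) = ∅ := by
    intro b hb1 hbm1 hP
    ext x
    simp only [Finset.mem_filter, Finset.mem_univ, true_and, Finset.notMem_empty,
      iff_false]
    intro hfx
    rcases cases5 x with h|h|⟨h1,h2⟩|⟨h1,h2⟩|⟨h1,h2⟩|⟨h1,h2⟩
    · rw [h, hf0] at hfx; exact hb1 hfx.symm
    · rw [h, hfm1] at hfx; exact hb1 hfx.symm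
    · apply hP
      rw [hfpp x h1 h2] at hfx
      have hx : x = (b - 1) * 2⁻¹ := by
        linear_combination (2:Fq)⁻¹ * hfx - x * h2i
      constructor
      · rw [← hx]; exact h1
      · rw [← hx1add b, ← hx]; exact h2
    · apply hP
      rw [hfnn x h1 h2] at hfx
      have hx : x = (-(b + 1)) * 2⁻¹ := by
        linear_combination (-(2:Fq)⁻¹) * hfx - x * h2i
      have e1 : quadraticChar Fq (-((b + 1) * 2⁻¹)) = -1 := by
        rw [show -((b + 1) * 2⁻¹) = (-(b + 1)) * 2⁻¹ from by ring, ← hx]; exact h1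
      have e2 : quadraticChar Fq (-((b - 1) * 2⁻¹)) = -1 := by
        rw [show -((b - 1) * 2⁻¹) = (-(b - 1)) * 2⁻¹ from by ring, ← hx2add b, ← hx]
        exact h2
      rw [aux_chi_neg h4] at e1 e2
      constructor
      · omega
      · omega
    · rw [hfnp x h1 h2] at hfx; exact hb1 hfx.symm
    · rw [hfpn x h1 h2] at hfx; exact hbm1 hfx.symm
  have hN2pos : ∀ b : Fq, b ≠ 1 → b ≠ -1 → auxP b → N b = 2 := by
    intro b hb1 hbm1 hP
    rw [hN' b, hfib2 b hb1 hbm1 hP]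
    have hxx : (b - 1) * 2⁻¹ ≠ (-(b + 1)) * 2⁻¹ := by
      intro h
      have h' := mul_right_cancel₀ (inv_ne_zero h2z) h
      have h2b : (2:Fq) * b = 0 := by linear_combination h'
      exact (hPne b hP).2.2 ((mul_eq_zero.mp h2b).resolve_left h2z)
    rw [Finset.card_insert_of_notMem (by simpa using hxx), Finset.card_singleton]
  have hN2zero : ∀ b : Fq, b ≠ 1 → b ≠ -1 → ¬ auxP b → N b = 0 := by
    intro b hb1 hbm1 hP
    rw [hN' b, hfib0 b hb1 hbm1 hP, Finset.card_empty]
  -- part 3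
  have hset3 : {b : Fq | b ≠ 1 ∧ b ≠ -1 ∧ N b = 2}.ncard = (Finset.univ.filter (auxP (Fq := Fq))).card := by
    rw [aux_ncard (fun b : Fq => b ≠ 1 ∧ b ≠ -1 ∧ N b = 2)]
    congr 1
    ext b
    simp only [Finset.mem_filter, Finset.mem_univ, true_and]
    constructor
    · rintro ⟨hb1, hbm1, hb2⟩
      by_contra hP
      rw [hN2zero b hb1 hbm1 hP] at hb2
      omega
    · intro hP
      obtain ⟨hb1, hbm1, -⟩ := hPne b hP
      exact ⟨hb1, hbm1, hN2pos b hb1 hbm1 hP⟩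
  have hPA : (Finset.univ.filter (auxP (Fq := Fq))).card = Afin.card := by
    apply Finset.card_nbij' (fun b => (b - 1) * 2⁻¹) (fun x => 2 * x + 1)
    · intro b hb
      simp only [Finset.mem_coe, Finset.mem_filter, Finset.mem_univ, true_and] at hb
      simp only [hAdef, Finset.mem_coe, Finset.mem_filter, Finset.mem_univ, true_and]
      exact ⟨hb.1, by rw [hx1add b]; exact hb.2⟩
    · intro x hx
      simp only [hAdef, Finset.mem_coe, Finset.mem_filter, Finset.mem_univ, true_and] at hx
      simp only [Finset.mem_coe, Finset.mem_filter, Finset.mem_univ, true_and]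
      constructor
      · rw [show (2 * x + 1 - 1) * 2⁻¹ = x from by linear_combination x * h2i]
        exact hx.1
      · rw [show (2 * x + 1 + 1) * 2⁻¹ = x + 1 from by linear_combination (x + 1) * h2i]
        exact hx.2
    · intro b _
      linear_combination (b - 1) * h2i
    · intro x _
      linear_combination x * h2i
  -- part 4
  have hcompl : Finset.univ.filter (fun b : Fq => ¬ N b = 0) =
      insert 1 (insert (-1) (Finset.univ.filter (auxP (Fq := Fq)))) := by
    ext b
    simp only [Finset.mem_filter, Finset.mem_univ, true_and, Finset.mem_insert]
    constructor
    · intro hb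
      by_cases hb1 : b = 1
      · exact Or.inl hb1
      by_cases hbm1 : b = -1
      · exact Or.inr (Or.inl hbm1)
      refine Or.inr (Or.inr ?_)
      by_contra hP
      exact hb (hN2zero b hb1 hbm1 hP)
    · rintro (rfl|rfl|hP)
      · rw [hcard1]; omega
      · rw [hcardm1]; omega
      · obtain ⟨hb1, hbm1, -⟩ := hPne b hP
        rw [hN2pos b hb1 hbm1 hP]; omega
  have hcardcompl : (Finset.univ.filter (fun b : Fq => ¬ N b = 0)).card = Afin.card + 2 := by
    rw [hcompl]
    have h1m : (1:Fq) ∉ insert (-1) (Finset.univ.filter (auxP (Fq := Fq))) := by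
      simp only [Finset.mem_insert, Finset.mem_filter, Finset.mem_univ, true_and]
      push_neg
      exact ⟨fun h => hn11 h.symm, fun hP => (hPne 1 hP).1 rfl⟩
    have hm1m : (-1:Fq) ∉ Finset.univ.filter (auxP (Fq := Fq)) := by
      simp only [Finset.mem_filter, Finset.mem_univ, true_and]
      exact fun hP => (hPne (-1) hP).2.1 rfl
    rw [Finset.card_insert_of_notMem h1m, Finset.card_insert_of_notMem hm1m, hPA]
  have hzero : {b : Fq | N b = 0}.ncard = Fintype.card Fq - (Afin.card + 2) := by
    rw [aux_ncard (fun b : Fq => N b = 0)]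
    have hsplit := Finset.card_filter_add_card_filter_not (s := Finset.univ)
      (p := fun b : Fq => N b = 0)
    rw [hcardcompl, Finset.card_univ] at hsplit
    omega
  refine ⟨?_, ?_, ?_, ?_⟩
  · rw [hcard1]; omega
  · rw [hcardm1]; omega
  · rw [hset3, hPA]; omega
  · rw [hzero]; omega
end

section
/- Let q = pⁿ with p an odd prime, q ≡ 1 (mod 4), and d = (q+1)/2. Then the number of quadruples (x₁,x₂,x₃,x₄) ∈ F_q⁴ satisfying x₁ − x₂ + x₃ − x₄ = 0 and x₁^d + x₂^d − x₃^d − x₄^d = 0 equals (q³ + 9q² − 5q + 3)/8. -/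
open Finset

set_option linter.unusedSectionVars false
set_option maxHeartbeats 1000000

namespace QuadCount

variable {Fq : Type*} [Field Fq] [Fintype Fq] [DecidableEq Fq]

lemma pow_d_sq (hq : ringChar Fq ≠ 2) {x : Fq} (hx : IsSquare x) :
    x ^ ((Fintype.card Fq + 1) / 2) = x := by
  obtain ⟨y, rfl⟩ := hx
  have hodd : Fintype.card Fq % 2 = 1 := FiniteField.odd_card_of_char_ne_two hq
  have h2 : (Fintype.card Fq + 1) / 2 + (Fintype.card Fq + 1) / 2 = Fintype.card Fq + 1 := by
    omega
  calc (y * y) ^ ((Fintype.card Fq + 1) / 2)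
      = y ^ ((Fintype.card Fq + 1) / 2) * y ^ ((Fintype.card Fq + 1) / 2) := mul_pow ..
    _ = y ^ (Fintype.card Fq + 1) := by rw [← pow_add, h2]
    _ = y ^ (Fintype.card Fq) * y := by rw [pow_succ]
    _ = y * y := by rw [FiniteField.pow_card]

lemma pow_d_nsq (hq : ringChar Fq ≠ 2) {x : Fq} (hx : ¬ IsSquare x) :
    x ^ ((Fintype.card Fq + 1) / 2) = -x := by
  have hx0 : x ≠ 0 := by rintro rfl; exact hx ⟨0, (mul_zero 0).symm⟩
  have hodd : Fintype.card Fq % 2 = 1 := FiniteField.odd_card_of_char_ne_two hq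
  have hd : (Fintype.card Fq + 1) / 2 = Fintype.card Fq / 2 + 1 := by omega
  have h1 : x ^ (Fintype.card Fq / 2) = -1 := by
    rcases FiniteField.pow_dichotomy hq hx0 with h | h
    · exact absurd ((FiniteField.isSquare_iff hq hx0).mpr h) hx
    · exact h
  rw [hd, pow_succ, h1, neg_one_mul]

lemma sq_neg_one (h4 : Fintype.card Fq % 4 = 1) : IsSquare (-1 : Fq) :=
  FiniteField.isSquare_neg_one_iff.mpr (by omega)

lemma sq_neg (h4 : Fintype.card Fq % 4 = 1) {x : Fq} (hx : IsSquare x) : IsSquare (-x) := by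
  simpa using (sq_neg_one h4).mul hx

lemma sq_neg_iff (h4 : Fintype.card Fq % 4 = 1) {x : Fq} : IsSquare (-x) ↔ IsSquare x :=
  ⟨fun h => by simpa using sq_neg h4 h, sq_neg h4⟩

lemma rc_zero : (univ.filter fun s : Fq => s * s = 0).card = 1 := by
  have h : (univ.filter fun s : Fq => s * s = 0) = {0} := by
    ext s; simp [mul_self_eq_zero]
  rw [h, card_singleton]

lemma rc_sq (hq : ringChar Fq ≠ 2) {y : Fq} (h : IsSquare y) (h0 : y ≠ 0) :
    (univ.filter fun s : Fq => s * s = y).card = 2 := by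
  obtain ⟨a, rfl⟩ := h
  have h2 : (2 : Fq) ≠ 0 := Ring.two_ne_zero hq
  have ha : a ≠ 0 := by rintro rfl; simp at h0
  have hne : a ≠ -a := by
    intro h
    apply ha
    have : a * 2 = 0 * 2 := by linear_combination h
    exact mul_right_cancel₀ h2 this
  have hfe : (univ.filter fun s : Fq => s * s = a * a) = {a, -a} := by
    ext s
    simp only [mem_filter, mem_univ, true_and, mem_insert, mem_singleton,
      mul_self_eq_mul_self_iff]
  rw [hfe, card_pair hne]

lemma rc_nsq {y : Fq} (h : ¬ IsSquare y) :
    (univ.filter fun s : Fq => s * s = y).card = 0 := by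
  rw [Finset.card_eq_zero]
  ext s
  simp only [mem_filter, mem_univ, true_and, notMem_empty, iff_false]
  exact fun hs => h ⟨s, hs.symm⟩


-- 2 * #squares = q + 1
lemma card_sq (hq : ringChar Fq ≠ 2) :
    2 * (univ.filter fun x : Fq => IsSquare x).card = Fintype.card Fq + 1 := by
  have hfib : (univ : Finset Fq).card =
      ∑ y ∈ univ, ((univ : Finset Fq).filter fun s => s * s = y).card :=
    Finset.card_eq_sum_card_fiberwise (fun s _ => mem_univ (s * s))
  have hsub : ∑ y ∈ univ.filter (fun x : Fq => IsSquare x),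
        ((univ : Finset Fq).filter fun s => s * s = y).card =
      ∑ y ∈ univ, ((univ : Finset Fq).filter fun s => s * s = y).card := by
    apply Finset.sum_subset (subset_univ _)
    intro y _ hy
    exact rc_nsq (by simpa using hy)
  have hpt : ∀ y ∈ univ.filter (fun x : Fq => IsSquare x),
      (2 : ℕ) = ((univ : Finset Fq).filter fun s => s * s = y).card
        + (if y = 0 then 1 else 0) := by
    intro y hy
    have hsy : IsSquare y := by simpa using hy
    by_cases h0 : y = 0
    · subst h0; rw [rc_zero]; simp
    · rw [rc_sq hq hsy h0]; simp [h0]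
  calc 2 * (univ.filter fun x : Fq => IsSquare x).card
      = ∑ _y ∈ univ.filter (fun x : Fq => IsSquare x), 2 := by
        rw [Finset.sum_const, smul_eq_mul, mul_comm]
    _ = ∑ y ∈ univ.filter (fun x : Fq => IsSquare x),
        (((univ : Finset Fq).filter fun s => s * s = y).card + (if y = 0 then 1 else 0)) :=
        Finset.sum_congr rfl hpt
    _ = (∑ y ∈ univ.filter (fun x : Fq => IsSquare x),
          ((univ : Finset Fq).filter fun s => s * s = y).card)
        + ∑ y ∈ univ.filter (fun x : Fq => IsSquare x), (if y = 0 then 1 else 0) :=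
        Finset.sum_add_distrib
    _ = Fintype.card Fq + 1 := by
        rw [hsub, ← hfib, card_univ, Finset.sum_ite_eq']
        simp [IsSquare.zero]

-- number of points on s^2 - t^2 = 1 is q - 1
lemma card_hyperbola (hq : ringChar Fq ≠ 2) :
    (univ.filter fun p : Fq × Fq => p.1 * p.1 - p.2 * p.2 = 1).card
      = Fintype.card Fq - 1 := by
  have h2 : (2 : Fq) ≠ 0 := Ring.two_ne_zero hq
  have := Finset.card_nbij' (s := univ.filter fun p : Fq × Fq => p.1 * p.1 - p.2 * p.2 = 1)
    (t := (univ : Finset Fq).erase 0)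
    (fun p => p.1 + p.2) (fun w => ((w + w⁻¹) / 2, (w - w⁻¹) / 2))
    (by
      intro p hp
      simp only [mem_coe, mem_filter, mem_univ, true_and] at hp
      simp only [mem_coe, mem_erase, mem_univ, and_true]
      intro h0
      have h1 : p.1 = -p.2 := by linear_combination h0
      rw [h1] at hp
      exact one_ne_zero (α := Fq) (by linear_combination -hp))
    (by
      intro w hw
      simp only [mem_coe, mem_erase, mem_univ, and_true] at hw
      simp only [mem_coe, mem_filter, mem_univ, true_and]
      field_simp
      ring)
    (by
      intro p hp
      simp only [mem_coe, mem_filter, mem_univ, true_and] at hp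
      have hsum : (p.1 + p.2) ≠ 0 := by
        intro h0
        apply one_ne_zero (α := Fq)
        rw [← hp]
        have : p.1 = -p.2 := by linear_combination h0
        rw [this]; ring
      have hinv : (p.1 + p.2)⁻¹ = p.1 - p.2 := by
        apply inv_eq_of_mul_eq_one_right
        linear_combination hp
      ext
      · show (p.1 + p.2 + (p.1 + p.2)⁻¹) / 2 = p.1
        rw [hinv]; field_simp; ring
      · show (p.1 + p.2 - (p.1 + p.2)⁻¹) / 2 = p.2
        rw [hinv]; field_simp; ring)
    (by
      intro w hw
      simp only [mem_coe, mem_erase, mem_univ, and_true] at hw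
      show (w + w⁻¹) / 2 + (w - w⁻¹) / 2 = w
      field_simp; ring)
  rw [this, card_erase_of_mem (mem_univ 0), card_univ]


-- 4 * n₊ = q + 3
lemma card_nplus (hq : ringChar Fq ≠ 2) (h4 : Fintype.card Fq % 4 = 1) :
    4 * (univ.filter fun x : Fq => IsSquare x ∧ IsSquare (x + 1)).card
      = Fintype.card Fq + 3 := by
  have h2 : (2 : Fq) ≠ 0 := Ring.two_ne_zero hq
  have hm1 : (-1 : Fq) ≠ 0 := by
    intro h; exact one_ne_zero (α := Fq) (by linear_combination -h)
  have hfib : (univ.filter fun p : Fq × Fq => p.1 * p.1 - p.2 * p.2 = 1).card =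
      ∑ x ∈ univ, ((univ.filter fun p : Fq × Fq => p.1 * p.1 - p.2 * p.2 = 1).filter
        fun p => p.2 * p.2 = x).card :=
    Finset.card_eq_sum_card_fiberwise (fun p _ => mem_univ (p.2 * p.2))
  have hfibval : ∀ x : Fq,
      ((univ.filter fun p : Fq × Fq => p.1 * p.1 - p.2 * p.2 = 1).filter
        fun p => p.2 * p.2 = x).card
      = (univ.filter fun s : Fq => s * s = x + 1).card
        * (univ.filter fun s : Fq => s * s = x).card := by
    intro x
    rw [filter_filter, ← card_product]
    congr 1
    ext p
    simp only [mem_filter, mem_univ, true_and, mem_product]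
    constructor
    · rintro ⟨hp1, hp2⟩; exact ⟨by linear_combination hp1 + hp2, hp2⟩
    · rintro ⟨hp1, hp2⟩; exact ⟨by linear_combination hp1 - hp2, hp2⟩
  have hsub : ∑ x ∈ univ.filter (fun x : Fq => IsSquare x ∧ IsSquare (x + 1)),
        ((univ.filter fun s : Fq => s * s = x + 1).card
          * (univ.filter fun s : Fq => s * s = x).card)
      = ∑ x ∈ univ, ((univ.filter fun s : Fq => s * s = x + 1).card
          * (univ.filter fun s : Fq => s * s = x).card) := by
    apply Finset.sum_subset (subset_univ _)
    intro x _ hx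
    simp only [mem_filter, mem_univ, true_and, not_and] at hx
    by_cases hsx : IsSquare x
    · rw [rc_nsq (hx hsx)]; ring
    · rw [rc_nsq hsx]; ring
  have hpt : ∀ x ∈ univ.filter (fun x : Fq => IsSquare x ∧ IsSquare (x + 1)),
      (4 : ℕ) = ((univ.filter fun s : Fq => s * s = x + 1).card
          * (univ.filter fun s : Fq => s * s = x).card)
        + ((if x = 0 then 2 else 0) + (if x = -1 then 2 else 0)) := by
    intro x hx
    simp only [mem_filter, mem_univ, true_and] at hx
    obtain ⟨hsx, hsx1⟩ := hx
    by_cases h0 : x = 0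
    · subst h0
      have hne : (0 : Fq) ≠ -1 := fun h => hm1 h.symm
      rw [rc_zero, zero_add, rc_sq hq IsSquare.one one_ne_zero]
      simp [hne]
    · by_cases hm : x = -1
      · subst hm
        rw [neg_add_cancel, rc_zero, rc_sq hq hsx hm1]
        simp [hm1]
      · have hx1 : x + 1 ≠ 0 := fun h => hm (by linear_combination h)
        rw [rc_sq hq hsx1 hx1, rc_sq hq hsx h0]
        simp [h0, hm]
  have hkey : 4 * (univ.filter fun x : Fq => IsSquare x ∧ IsSquare (x + 1)).card
      = (Fintype.card Fq - 1) + (2 + 2) := by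
    calc 4 * (univ.filter fun x : Fq => IsSquare x ∧ IsSquare (x + 1)).card
        = ∑ _x ∈ univ.filter (fun x : Fq => IsSquare x ∧ IsSquare (x + 1)), 4 := by
          rw [Finset.sum_const, smul_eq_mul, mul_comm]
      _ = ∑ x ∈ univ.filter (fun x : Fq => IsSquare x ∧ IsSquare (x + 1)),
          (((univ.filter fun s : Fq => s * s = x + 1).card
            * (univ.filter fun s : Fq => s * s = x).card)
          + ((if x = 0 then 2 else 0) + (if x = -1 then 2 else 0))) :=
          Finset.sum_congr rfl hpt
      _ = (∑ x ∈ univ.filter (fun x : Fq => IsSquare x ∧ IsSquare (x + 1)),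
            ((univ.filter fun s : Fq => s * s = x + 1).card
              * (univ.filter fun s : Fq => s * s = x).card))
          + ((∑ x ∈ univ.filter (fun x : Fq => IsSquare x ∧ IsSquare (x + 1)),
              (if x = 0 then 2 else 0))
            + (∑ x ∈ univ.filter (fun x : Fq => IsSquare x ∧ IsSquare (x + 1)),
              (if x = -1 then 2 else 0))) := by
          rw [Finset.sum_add_distrib, Finset.sum_add_distrib]
      _ = (Fintype.card Fq - 1) + (2 + 2) := by
          congr 1
          · rw [hsub, ← Finset.sum_congr rfl (fun x _ => hfibval x), ← hfib,
              card_hyperbola hq]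
          · congr 1
            · rw [Finset.sum_ite_eq']
              simp [IsSquare.zero, IsSquare.one]
            · rw [Finset.sum_ite_eq']
              simp [IsSquare.zero, sq_neg_one h4]
  have hq1 : 1 ≤ Fintype.card Fq := Fintype.card_pos
  omega

lemma card_shift :
    (univ.filter fun x : Fq => IsSquare (x + 1)).card
      = (univ.filter fun x : Fq => IsSquare x).card := by
  apply Finset.card_nbij' (fun x => x + 1) (fun y => y - 1) <;>
    intro a ha <;> simp at ha ⊢ <;> simpa using ha

-- 4 * n₋ = q - 1
lemma card_nminus (hq : ringChar Fq ≠ 2) (h4 : Fintype.card Fq % 4 = 1) :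
    4 * (univ.filter fun x : Fq => ¬IsSquare x ∧ ¬IsSquare (x + 1)).card + 1
      = Fintype.card Fq := by
  classical
  have hp := card_nplus hq h4
  have hA := card_sq hq
  have h1 : (univ.filter fun x : Fq => IsSquare x ∧ IsSquare (x + 1)).card
      + (univ.filter fun x : Fq => IsSquare x ∧ ¬IsSquare (x + 1)).card
      = (univ.filter fun x : Fq => IsSquare x).card := by
    rw [← filter_filter, ← filter_filter]
    exact card_filter_add_card_filter_not _
  have h2 : (univ.filter fun x : Fq => IsSquare (x + 1) ∧ IsSquare x).card
      + (univ.filter fun x : Fq => IsSquare (x + 1) ∧ ¬IsSquare x).card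
      = (univ.filter fun x : Fq => IsSquare (x + 1)).card := by
    rw [← filter_filter, ← filter_filter]
    exact card_filter_add_card_filter_not _
  have h2' : (univ.filter fun x : Fq => IsSquare (x + 1) ∧ IsSquare x)
      = (univ.filter fun x : Fq => IsSquare x ∧ IsSquare (x + 1)) := by
    ext x; simp [and_comm]
  have h3 : (univ.filter fun x : Fq => ¬IsSquare x ∧ IsSquare (x + 1)).card
      + (univ.filter fun x : Fq => ¬IsSquare x ∧ ¬IsSquare (x + 1)).card
      = (univ.filter fun x : Fq => ¬IsSquare x).card := by
    rw [← filter_filter, ← filter_filter]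
    exact card_filter_add_card_filter_not _
  have h3' : (univ.filter fun x : Fq => IsSquare (x + 1) ∧ ¬IsSquare x)
      = (univ.filter fun x : Fq => ¬IsSquare x ∧ IsSquare (x + 1)) := by
    ext x; simp [and_comm]
  have h4' : (univ.filter fun x : Fq => IsSquare x).card
      + (univ.filter fun x : Fq => ¬IsSquare x).card = Fintype.card Fq := by
    rw [← card_univ]
    exact card_filter_add_card_filter_not _
  have h5 := card_shift (Fq := Fq)
  rw [h2'] at h2
  rw [h3'] at h2
  omega


lemma card_C1 (hq : ringChar Fq ≠ 2) (h4 : Fintype.card Fq % 4 = 1) :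
    (univ.filter fun p : Fq × Fq =>
        (p.1 + 1) ^ ((Fintype.card Fq + 1) / 2) - p.1 ^ ((Fintype.card Fq + 1) / 2)
        + ((p.2 + 1) ^ ((Fintype.card Fq + 1) / 2) - p.2 ^ ((Fintype.card Fq + 1) / 2))
        = 0).card
    = 2 * (univ.filter fun x : Fq => IsSquare x ∧ IsSquare (x + 1)).card
        * (univ.filter fun x : Fq => ¬IsSquare x ∧ ¬IsSquare (x + 1)).card := by
  classical
  have h2 : (2 : Fq) ≠ 0 := Ring.two_ne_zero hq
  have hfe : (univ.filter fun p : Fq × Fq =>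
        (p.1 + 1) ^ ((Fintype.card Fq + 1) / 2) - p.1 ^ ((Fintype.card Fq + 1) / 2)
        + ((p.2 + 1) ^ ((Fintype.card Fq + 1) / 2) - p.2 ^ ((Fintype.card Fq + 1) / 2)) = 0)
      = ((univ.filter fun x : Fq => IsSquare x ∧ IsSquare (x + 1)) ×ˢ
          (univ.filter fun x : Fq => ¬IsSquare x ∧ ¬IsSquare (x + 1)))
        ∪ ((univ.filter fun x : Fq => ¬IsSquare x ∧ ¬IsSquare (x + 1)) ×ˢ
          (univ.filter fun x : Fq => IsSquare x ∧ IsSquare (x + 1))) := by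
    ext ⟨x, y⟩
    simp only [mem_filter, mem_univ, true_and, mem_union, mem_product]
    constructor
    · intro e
      by_cases hx : IsSquare x <;> by_cases hx1 : IsSquare (x + 1) <;>
        by_cases hy : IsSquare y <;> by_cases hy1 : IsSquare (y + 1)
      -- case 1: S S S S
      · rw [pow_d_sq hq hx, pow_d_sq hq hx1, pow_d_sq hq hy, pow_d_sq hq hy1] at e
        exact absurd (by linear_combination e : (2 : Fq) = 0) h2
      -- case 2: S S S ¬S
      · rw [pow_d_sq hq hx, pow_d_sq hq hx1, pow_d_sq hq hy, pow_d_nsq hq hy1] at e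
        have hy0 : y = 0 := by
          apply mul_right_cancel₀ h2; linear_combination -e
        exact absurd (by rw [hy0, zero_add]; exact IsSquare.one) hy1
      -- case 3: S S ¬S S
      · rw [pow_d_sq hq hx, pow_d_sq hq hx1, pow_d_nsq hq hy, pow_d_sq hq hy1] at e
        have hyv : y = -1 := by
          apply mul_right_cancel₀ h2; linear_combination e
        exact absurd (hyv ▸ sq_neg_one h4) hy
      -- case 4: S S ¬S ¬S  (member, left)
      · exact Or.inl ⟨⟨hx, hx1⟩, hy, hy1⟩
      -- case 5: S ¬S S S
      · rw [pow_d_sq hq hx, pow_d_nsq hq hx1, pow_d_sq hq hy, pow_d_sq hq hy1] at e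
        have hx0 : x = 0 := by
          apply mul_right_cancel₀ h2; linear_combination -e
        exact absurd (by rw [hx0, zero_add]; exact IsSquare.one) hx1
      -- case 6: S ¬S S ¬S
      · rw [pow_d_sq hq hx, pow_d_nsq hq hx1, pow_d_sq hq hy, pow_d_nsq hq hy1] at e
        have hyv : y = -(x + 1) := by
          apply mul_right_cancel₀ h2; linear_combination -e
        exact absurd ((sq_neg_iff h4).mp (hyv ▸ hy)) hx1
      -- case 7: S ¬S ¬S S
      · rw [pow_d_sq hq hx, pow_d_nsq hq hx1, pow_d_nsq hq hy, pow_d_sq hq hy1] at e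
        have hyv : y = x := by
          apply mul_right_cancel₀ h2; linear_combination e
        exact absurd (hyv ▸ hx) hy
      -- case 8: S ¬S ¬S ¬S
      · rw [pow_d_sq hq hx, pow_d_nsq hq hx1, pow_d_nsq hq hy, pow_d_nsq hq hy1] at e
        have hxv : x = -1 := by
          apply mul_right_cancel₀ h2; linear_combination -e
        exact absurd (by rw [hxv, neg_add_cancel]; exact IsSquare.zero) hx1
      -- case 9: ¬S S S S
      · rw [pow_d_nsq hq hx, pow_d_sq hq hx1, pow_d_sq hq hy, pow_d_sq hq hy1] at e
        have hxv : x = -1 := by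
          apply mul_right_cancel₀ h2; linear_combination e
        exact absurd (hxv ▸ sq_neg_one h4) hx
      -- case 10: ¬S S S ¬S
      · rw [pow_d_nsq hq hx, pow_d_sq hq hx1, pow_d_sq hq hy, pow_d_nsq hq hy1] at e
        have hyv : y = x := by
          apply mul_right_cancel₀ h2; linear_combination -e
        exact absurd (hyv ▸ hy) hx
      -- case 11: ¬S S ¬S S
      · rw [pow_d_nsq hq hx, pow_d_sq hq hx1, pow_d_nsq hq hy, pow_d_sq hq hy1] at e
        have hyv : y + 1 = -x := by
          apply mul_right_cancel₀ h2; linear_combination e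
        exact absurd ((sq_neg_iff h4).mp (hyv ▸ hy1)) hx
      -- case 12: ¬S S ¬S ¬S
      · rw [pow_d_nsq hq hx, pow_d_sq hq hx1, pow_d_nsq hq hy, pow_d_nsq hq hy1] at e
        have hxv : x = 0 := by
          apply mul_right_cancel₀ h2; linear_combination e
        exact absurd (hxv ▸ IsSquare.zero) hx
      -- case 13: ¬S ¬S S S (member, right)
      · exact Or.inr ⟨⟨hx, hx1⟩, hy, hy1⟩
      -- case 14: ¬S ¬S S ¬S
      · rw [pow_d_nsq hq hx, pow_d_nsq hq hx1, pow_d_sq hq hy, pow_d_nsq hq hy1] at e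
        have hyv : y = -1 := by
          apply mul_right_cancel₀ h2; linear_combination -e
        exact absurd (by rw [hyv, neg_add_cancel]; exact IsSquare.zero) hy1
      -- case 15: ¬S ¬S ¬S S
      · rw [pow_d_nsq hq hx, pow_d_nsq hq hx1, pow_d_nsq hq hy, pow_d_sq hq hy1] at e
        have hyv : y = 0 := by
          apply mul_right_cancel₀ h2; linear_combination e
        exact absurd (hyv ▸ IsSquare.zero) hy
      -- case 16: ¬S ¬S ¬S ¬S
      · rw [pow_d_nsq hq hx, pow_d_nsq hq hx1, pow_d_nsq hq hy, pow_d_nsq hq hy1] at e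
        exact absurd (by linear_combination -e : (2 : Fq) = 0) h2
    · rintro (⟨⟨hx, hx1⟩, hy, hy1⟩ | ⟨⟨hx, hx1⟩, hy, hy1⟩)
      · rw [pow_d_sq hq hx, pow_d_sq hq hx1, pow_d_nsq hq hy, pow_d_nsq hq hy1]; ring
      · rw [pow_d_nsq hq hx, pow_d_nsq hq hx1, pow_d_sq hq hy, pow_d_sq hq hy1]; ring
  rw [hfe, card_union_of_disjoint, card_product, card_product]
  · ring
  · rw [Finset.disjoint_left]
    rintro ⟨x, y⟩ hm1 hm2
    simp only [mem_product, mem_filter, mem_univ, true_and] at hm1 hm2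
    exact hm2.1.1 hm1.1.1

lemma card_Cu {d : ℕ} {u : Fq} (hu : u ≠ 0) :
    (univ.filter fun p : Fq × Fq =>
        (p.1 + u) ^ d - p.1 ^ d + ((p.2 + u) ^ d - p.2 ^ d) = 0).card
    = (univ.filter fun p : Fq × Fq =>
        (p.1 + 1) ^ d - p.1 ^ d + ((p.2 + 1) ^ d - p.2 ^ d) = 0).card := by
  classical
  apply Finset.card_nbij' (fun p => (u⁻¹ * p.1, u⁻¹ * p.2)) (fun p => (u * p.1, u * p.2))
  · rintro ⟨x, y⟩ hp
    simp only [mem_coe, mem_filter, mem_univ, true_and] at hp ⊢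
    have e1 : u⁻¹ * x + 1 = u⁻¹ * (x + u) := by field_simp
    have e2 : u⁻¹ * y + 1 = u⁻¹ * (y + u) := by field_simp
    rw [e1, e2, mul_pow, mul_pow, mul_pow, mul_pow]
    linear_combination (u⁻¹ : Fq) ^ d * hp
  · rintro ⟨x, y⟩ hp
    simp only [mem_coe, mem_filter, mem_univ, true_and] at hp ⊢
    have e1 : u * x + u = u * (x + 1) := by ring
    have e2 : u * y + u = u * (y + 1) := by ring
    rw [e1, e2, mul_pow, mul_pow, mul_pow, mul_pow]
    linear_combination (u : Fq) ^ d * hp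
  · rintro ⟨x, y⟩ _
    simp [mul_inv_cancel_left₀ hu]
  · rintro ⟨x, y⟩ _
    simp [inv_mul_cancel_left₀ hu]


end QuadCount

open QuadCount Finset in
theorem quadruple_count_q1mod4
    {Fq : Type*} [Field Fq] [Fintype Fq] [DecidableEq Fq]
    (hq : ringChar Fq ≠ 2) (h4 : Fintype.card Fq % 4 = 1) :
    {t : Fq × Fq × Fq × Fq |
        t.1 - t.2.1 + t.2.2.1 - t.2.2.2 = 0 ∧
        t.1 ^ ((Fintype.card Fq + 1) / 2) + t.2.1 ^ ((Fintype.card Fq + 1) / 2) -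
          t.2.2.1 ^ ((Fintype.card Fq + 1) / 2) -
          t.2.2.2 ^ ((Fintype.card Fq + 1) / 2) = 0}.ncard =
      (Fintype.card Fq ^ 3 + 9 * Fintype.card Fq ^ 2 - 5 * Fintype.card Fq + 3) / 8 := by
  classical
  have hset : {t : Fq × Fq × Fq × Fq |
        t.1 - t.2.1 + t.2.2.1 - t.2.2.2 = 0 ∧
        t.1 ^ ((Fintype.card Fq + 1) / 2) + t.2.1 ^ ((Fintype.card Fq + 1) / 2) -
          t.2.2.1 ^ ((Fintype.card Fq + 1) / 2) -
          t.2.2.2 ^ ((Fintype.card Fq + 1) / 2) = 0}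
      = ↑(univ.filter fun t : Fq × Fq × Fq × Fq =>
          t.1 - t.2.1 + t.2.2.1 - t.2.2.2 = 0 ∧
          t.1 ^ ((Fintype.card Fq + 1) / 2) + t.2.1 ^ ((Fintype.card Fq + 1) / 2) -
            t.2.2.1 ^ ((Fintype.card Fq + 1) / 2) -
            t.2.2.2 ^ ((Fintype.card Fq + 1) / 2) = 0) := by
    ext t; simp
  rw [hset, Set.ncard_coe_finset]
  -- reduce the quadruple count to a triple count
  have hT : (univ.filter fun t : Fq × Fq × Fq × Fq =>
          t.1 - t.2.1 + t.2.2.1 - t.2.2.2 = 0 ∧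
          t.1 ^ ((Fintype.card Fq + 1) / 2) + t.2.1 ^ ((Fintype.card Fq + 1) / 2) -
            t.2.2.1 ^ ((Fintype.card Fq + 1) / 2) -
            t.2.2.2 ^ ((Fintype.card Fq + 1) / 2) = 0).card
      = (univ.filter fun w : Fq × Fq × Fq =>
          (w.2.1 + w.1) ^ ((Fintype.card Fq + 1) / 2) - w.2.1 ^ ((Fintype.card Fq + 1) / 2)
          + ((w.2.2 + w.1) ^ ((Fintype.card Fq + 1) / 2) - w.2.2 ^ ((Fintype.card Fq + 1) / 2))
          = 0).card := by
    apply Finset.card_nbij' (fun t => (t.1 - t.2.2.2, t.2.2.1, t.2.2.2))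
      (fun w => (w.2.2 + w.1, w.2.1 + w.1, w.2.1, w.2.2))
    · rintro ⟨a, b, c, e⟩ ht
      simp only [mem_coe, mem_filter, mem_univ, true_and] at ht ⊢
      obtain ⟨h1, h2⟩ := ht
      have hb : c + (a - e) = b := by linear_combination h1
      have ha : e + (a - e) = a := by ring
      rw [hb, ha]
      linear_combination h2
    · rintro ⟨u, x, y⟩ hw
      simp only [mem_coe, mem_filter, mem_univ, true_and] at hw ⊢
      exact ⟨by ring, by linear_combination hw⟩
    · rintro ⟨a, b, c, e⟩ ht
      simp only [mem_coe, mem_filter, mem_univ, true_and] at ht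
      have hb : c + (a - e) = b := by linear_combination ht.1
      have ha : e + (a - e) = a := by ring
      show ((e + (a - e), c + (a - e), c, e) : Fq × Fq × Fq × Fq) = (a, b, c, e)
      rw [ha, hb]
    · rintro ⟨u, x, y⟩ _
      show ((y + u - y, x, y) : Fq × Fq × Fq) = (u, x, y)
      have h : y + u - y = u := by ring
      rw [h]
  rw [hT]
  -- fiberwise over the first coordinate
  rw [Finset.card_eq_sum_card_fiberwise
    (f := fun w : Fq × Fq × Fq => w.1) (t := univ) (fun w _ => mem_univ w.1)]
  have hfibu : ∀ u : Fq,
      ((univ.filter fun w : Fq × Fq × Fq =>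
          (w.2.1 + w.1) ^ ((Fintype.card Fq + 1) / 2) - w.2.1 ^ ((Fintype.card Fq + 1) / 2)
          + ((w.2.2 + w.1) ^ ((Fintype.card Fq + 1) / 2) - w.2.2 ^ ((Fintype.card Fq + 1) / 2))
          = 0).filter fun w => w.1 = u).card
      = (univ.filter fun p : Fq × Fq =>
          (p.1 + u) ^ ((Fintype.card Fq + 1) / 2) - p.1 ^ ((Fintype.card Fq + 1) / 2)
          + ((p.2 + u) ^ ((Fintype.card Fq + 1) / 2) - p.2 ^ ((Fintype.card Fq + 1) / 2))
          = 0).card := by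
    intro u
    apply Finset.card_nbij' (fun w => (w.2.1, w.2.2)) (fun p => (u, p.1, p.2))
    · rintro ⟨v, x, y⟩ hw
      simp only [mem_coe, filter_filter, mem_filter, mem_univ, true_and] at hw ⊢
      obtain ⟨hc, rfl⟩ := hw
      exact hc
    · rintro ⟨x, y⟩ hp
      simp only [mem_coe, filter_filter, mem_filter, mem_univ, true_and] at hp ⊢
      exact ⟨hp, trivial⟩
    · rintro ⟨v, x, y⟩ hw
      simp only [mem_coe, filter_filter, mem_filter, mem_univ, true_and] at hw
      rw [hw.2]
    · rintro ⟨x, y⟩ _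
      rfl
  -- split the sum at u = 0
  rw [← Finset.sum_erase_add univ _ (mem_univ (0 : Fq))]
  have hrest : ∀ u ∈ (univ : Finset Fq).erase 0,
      ((univ.filter fun w : Fq × Fq × Fq =>
          (w.2.1 + w.1) ^ ((Fintype.card Fq + 1) / 2) - w.2.1 ^ ((Fintype.card Fq + 1) / 2)
          + ((w.2.2 + w.1) ^ ((Fintype.card Fq + 1) / 2) - w.2.2 ^ ((Fintype.card Fq + 1) / 2))
          = 0).filter fun w => w.1 = u).card
      = (univ.filter fun p : Fq × Fq =>
          (p.1 + 1) ^ ((Fintype.card Fq + 1) / 2) - p.1 ^ ((Fintype.card Fq + 1) / 2)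
          + ((p.2 + 1) ^ ((Fintype.card Fq + 1) / 2) - p.2 ^ ((Fintype.card Fq + 1) / 2))
          = 0).card := by
    intro u hu
    rw [hfibu u, card_Cu (ne_of_mem_erase hu)]
  rw [Finset.sum_congr rfl hrest, Finset.sum_const,
    card_erase_of_mem (mem_univ (0 : Fq)), card_univ, smul_eq_mul, hfibu 0]
  have hc0 : (univ.filter fun p : Fq × Fq =>
      (p.1 + 0) ^ ((Fintype.card Fq + 1) / 2) - p.1 ^ ((Fintype.card Fq + 1) / 2)
      + ((p.2 + 0) ^ ((Fintype.card Fq + 1) / 2) - p.2 ^ ((Fintype.card Fq + 1) / 2))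
      = 0).card = Fintype.card Fq * Fintype.card Fq := by
    rw [filter_true_of_mem (fun p _ => by simp), card_univ, Fintype.card_prod]
  rw [hc0, card_C1 hq h4]
  -- final arithmetic
  have hnp := card_nplus hq h4
  have hnm := card_nminus hq h4
  have hq2 : 2 ≤ Fintype.card Fq := Fintype.one_lt_card
  obtain ⟨k, hk⟩ : ∃ k, Fintype.card Fq = 4 * k + 1 :=
    ⟨Fintype.card Fq / 4, by omega⟩
  have hnp' : (univ.filter fun x : Fq => IsSquare x ∧ IsSquare (x + 1)).card = k + 1 := by
    omega
  have hnm' : (univ.filter fun x : Fq => ¬IsSquare x ∧ ¬IsSquare (x + 1)).card = k := by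
    omega
  rw [hnp', hnm', hk]
  have h1 : 4 * k + 1 - 1 = 4 * k := by omega
  rw [h1]
  have hle : 5 * (4 * k + 1) ≤ (4 * k + 1) ^ 3 + 9 * (4 * k + 1) ^ 2 := by nlinarith
  have h8 : (4 * k + 1) ^ 3 + 9 * (4 * k + 1) ^ 2 - 5 * (4 * k + 1) + 3
      = (4 * k * (2 * (k + 1) * k) + (4 * k + 1) * (4 * k + 1)) * 8 := by
    zify [hle]; ring
  exact (Nat.div_eq_of_eq_mul_left (by norm_num) h8).symm
end

section
/- Let q be an odd prime power, η the quadratic character of F_q, and c ∈ F_q with c ≠ 0, 1, −1. Then ∑_{b∈F_q} η((b²−1)(b²−c²)) = ∑_{a∈F_q} η(a(a−1)(a−c²)) − 1. -/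
open Finset

lemma sum_quadChar_mul_shift {Fq : Type*} [Field Fq] [Fintype Fq] [DecidableEq Fq]
    (hq : ringChar Fq ≠ 2) (k : Fq) (hk : k ≠ 0) :
    ∑ a : Fq, quadraticChar Fq (a * (a + k)) = -1 := by
  have key : ∑ a : Fq, quadraticChar Fq (a * (a + k))
      = ∑ a ∈ univ.erase (0 : Fq), quadraticChar Fq (1 + k * a⁻¹) := by
    rw [← Finset.add_sum_erase univ
      (fun a : Fq => (quadraticChar Fq (a * (a + k)) : ℤ)) (Finset.mem_univ 0)]
    simp only [zero_mul, quadraticChar_zero, zero_add]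
    apply Finset.sum_congr rfl
    intro a ha
    have ha0 : a ≠ 0 := by simpa using (Finset.mem_erase.mp ha).1
    have : a * (a + k) = a ^ 2 * (1 + k * a⁻¹) := by
      field_simp
    rw [this, map_mul, map_pow]
    have : quadraticChar Fq a ^ 2 = 1 := by
      rw [quadraticChar_sq_one ha0]
    rw [this, one_mul]
  rw [key]
  have bij : ∑ a ∈ univ.erase (0 : Fq), quadraticChar Fq (1 + k * a⁻¹)
      = ∑ x ∈ univ.erase (1 : Fq), quadraticChar Fq x := by
    apply Finset.sum_nbij' (fun a => 1 + k * a⁻¹) (fun x => k * (x - 1)⁻¹)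
    · intro a ha
      have ha0 : a ≠ 0 := by simpa using (Finset.mem_erase.mp ha).1
      simp only [mem_erase, mem_univ, and_true]
      intro h
      have : k * a⁻¹ = 0 := by linear_combination h
      simp [hk, ha0] at this
    · intro x hx
      have hx1 : x ≠ 1 := by simpa using (Finset.mem_erase.mp hx).1
      simp only [mem_erase, mem_univ, and_true]
      exact mul_ne_zero hk (inv_ne_zero (sub_ne_zero.mpr hx1))
    · intro a ha
      have ha0 : a ≠ 0 := by simpa using (Finset.mem_erase.mp ha).1
      field_simp
      rw [show a + k - a = k by ring, div_self hk]
    · intro x hx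
      have hx1 : x ≠ 1 := by simpa using (Finset.mem_erase.mp hx).1
      have h : x - 1 ≠ 0 := sub_ne_zero.mpr hx1
      field_simp
      ring
    · intros; rfl
  rw [bij]
  have := quadraticChar_sum_zero hq (F := Fq)
  rw [← Finset.sum_erase_add univ _ (Finset.mem_univ (1 : Fq))] at this
  simpa using this

theorem quartic_sum_eq_cubic_sum_sub_one
    {Fq : Type*} [Field Fq] [Fintype Fq] [DecidableEq Fq]
    (hq : ringChar Fq ≠ 2) (c : Fq) (hc0 : c ≠ 0) (hc1 : c ≠ 1) (hcm1 : c ≠ -1) :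
    ∑ b : Fq, quadraticChar Fq ((b ^ 2 - 1) * (b ^ 2 - c ^ 2)) =
      (∑ a : Fq, quadraticChar Fq (a * (a - 1) * (a - c ^ 2))) - 1 := by
  set f : Fq → ℤ := fun a => quadraticChar Fq ((a - 1) * (a - c ^ 2)) with hf
  have step1 : ∑ b : Fq, quadraticChar Fq ((b ^ 2 - 1) * (b ^ 2 - c ^ 2))
      = ∑ a : Fq, ((quadraticChar Fq a : ℤ) + 1) * f a := by
    have := Finset.sum_fiberwise (univ : Finset Fq)
      (fun b : Fq => b ^ 2) (fun b => f (b ^ 2))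
    rw [← this]
    refine Finset.sum_congr rfl fun a _ => ?_
    have hcard : ((univ.filter fun b : Fq => b ^ 2 = a).card : ℤ)
        = quadraticChar Fq a + 1 := by
      have := quadraticChar_card_sqrts hq a
      rw [← this]
      congr 1
      rw [Set.toFinset_setOf]
    calc ∑ b ∈ univ.filter (fun b : Fq => b ^ 2 = a), f (b ^ 2)
        = ∑ b ∈ univ.filter (fun b : Fq => b ^ 2 = a), f a := by
          refine Finset.sum_congr rfl fun b hb => ?_
          rw [(Finset.mem_filter.mp hb).2]
      _ = ((univ.filter fun b : Fq => b ^ 2 = a).card : ℤ) * f a := by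
          rw [Finset.sum_const, nsmul_eq_mul]
      _ = ((quadraticChar Fq a : ℤ) + 1) * f a := by rw [hcard]
  rw [step1]
  have split : ∑ a : Fq, ((quadraticChar Fq a : ℤ) + 1) * f a
      = (∑ a : Fq, quadraticChar Fq (a * (a - 1) * (a - c ^ 2))) + ∑ a : Fq, f a := by
    rw [← Finset.sum_add_distrib]
    refine Finset.sum_congr rfl fun a _ => ?_
    simp only [hf, add_mul, one_mul, mul_assoc, map_mul]
  rw [split]
  have hk : (1 : Fq) - c ^ 2 ≠ 0 := by
    intro h
    have h2 : (c - 1) * (c + 1) = 0 := by linear_combination -h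
    rcases mul_eq_zero.mp h2 with h' | h'
    · exact hc1 (by linear_combination h')
    · exact hcm1 (by linear_combination h')
  have shift : ∑ a : Fq, f a = -1 := by
    have := sum_quadChar_mul_shift hq (1 - c ^ 2) hk
    rw [← this]
    refine Fintype.sum_equiv (Equiv.addRight (-1 : Fq)) _ _ fun a => ?_
    simp only [hf, Equiv.coe_addRight]
    congr 1
    ring
  rw [shift]
  ring
end
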